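/- arXiv:2107.08813 — 7 statements merged into one kernel-verified Lean document; each statement's English description precedes it below -/
import Mathlib

section
/- Let n ≥ 1, m ≥ 1, let w^1,…,w^m ∈ ℝ^d be arbitrary weight vectors, and let a* ∈ {0,1}^n. Then there exist a price vector p ∈ ℝ^d and pairwise disjoint subsets S^1,…,S^m ⊆ [n] with ⋃_{b=1}^m S^b = {i ∈ [n] : a*_i = 1}, such that for every b ∈ [m] and every T ⊆ [n] one has ⟨w^b − p, a_{S^b}⟩ ≥ ⟨w^b − p, a_T⟩ (i.e. S^b ∈ D(w^b, p)). In other words, a competitive equilibrium with anonymous graphical pricing exists at every bundle a* ∈ {0,1}^n when all valuations are graphical with underlying graph the complete graph K_n. -/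
/-- Edges of the complete graph `K_n`: 2-element subsets of `Fin n`,
encoded as non-diagonal elements of `Sym2 (Fin n)`. -/
abbrev EdgeKn (n : ℕ) : Type := {e : Sym2 (Fin n) // ¬ e.IsDiag}

/-- Coordinates of `ℝ^d`, `d = n + n(n-1)/2`: vertices and edges of `K_n`. -/
abbrev CoordKn (n : ℕ) : Type := Fin n ⊕ EdgeKn n

/-- The edge coordinate `{i,j}` for distinct `i, j`. -/
def edgeCoord {n : ℕ} (i j : Fin n) (h : i ≠ j) : CoordKn n :=
  Sum.inr ⟨s(i, j), fun hd => h (Sym2.mk_isDiag_iff.mp hd)⟩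

/-- The characteristic vector `a_S` of `S ⊆ [n]`. -/
def charVec {n : ℕ} (S : Finset (Fin n)) : CoordKn n → ℝ
  | Sum.inl i => if i ∈ S then 1 else 0
  | Sum.inr e => Sym2.lift ⟨fun i j => if i ∈ S ∧ j ∈ S then (1 : ℝ) else 0,
      fun i j => by simp [and_comm]⟩ e.1

/-- The standard inner product on `ℝ^d`. -/
def dotP {n : ℕ} (x y : CoordKn n → ℝ) : ℝ := ∑ c, x c * y c

/-- `S` is in the demand set `D(w, p)`: it maximizes `⟨w - p, a_T⟩` over all `T ⊆ [n]`. -/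
def InDemand {n : ℕ} (w p : CoordKn n → ℝ) (S : Finset (Fin n)) : Prop :=
  ∀ T : Finset (Fin n),
    dotP (fun c => w c - p c) (charVec T) ≤ dotP (fun c => w c - p c) (charVec S)

/-- The correlation polytope `P(K_n)`. -/
def corrPolytope (n : ℕ) : Set (CoordKn n → ℝ) :=
  convexHull ℝ (Set.range (charVec (n := n)))

/-- The dilate `m·A` of a set `A ⊆ ℝ^d`. -/
def dilate {n : ℕ} (m : ℕ) (A : Set (CoordKn n → ℝ)) : Set (CoordKn n → ℝ) :=
  {x | ∃ y ∈ A, x = (m : ℝ) • y}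

/-- `F` is a face of `P(K_n)`: the set of maximizers of some linear functional `⟨c, ·⟩`. -/
def IsFaceOf {n : ℕ} (F : Set (CoordKn n → ℝ)) : Prop :=
  ∃ c : CoordKn n → ℝ,
    F = {x | x ∈ corrPolytope n ∧ ∀ y ∈ corrPolytope n, dotP c y ≤ dotP c x}

namespace Aux

variable {n : ℕ}

lemma charVec_inl (S : Finset (Fin n)) (i : Fin n) :
    charVec S (Sum.inl i) = if i ∈ S then 1 else 0 := rfl

lemma charVec_inr (S : Finset (Fin n)) (e : EdgeKn n) :
    charVec S (Sum.inr e) = if e.1 ∈ S.sym2 then 1 else 0 := by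
  obtain ⟨e, he⟩ := e
  induction e using Sym2.ind with
  | _ i j => simp [charVec, Finset.mk_mem_sym2_iff]

lemma charVec_nonneg (S : Finset (Fin n)) (c : CoordKn n) : 0 ≤ charVec S c := by
  cases c with
  | inl i => rw [charVec_inl]; positivity
  | inr e => rw [charVec_inr]; positivity

lemma charVec_le_one (S : Finset (Fin n)) (c : CoordKn n) : charVec S c ≤ 1 := by
  cases c with
  | inl i => rw [charVec_inl]; split <;> norm_num
  | inr e => rw [charVec_inr]; split <;> norm_num

def edgesIn (A : Finset (Fin n)) : Finset (EdgeKn n) :=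
  Finset.univ.filter (fun e => e.1 ∈ A.sym2)

lemma dot_charVec (x : CoordKn n → ℝ) (T : Finset (Fin n)) :
    dotP x (charVec T) =
      (∑ i ∈ T, x (Sum.inl i)) + ∑ e ∈ edgesIn T, x (Sum.inr e) := by
  unfold dotP
  rw [Fintype.sum_sum_type]
  congr 1
  · simp only [charVec_inl, mul_ite, mul_one, mul_zero]
    rw [Finset.sum_ite_mem, Finset.univ_inter]
  · simp only [charVec_inr, mul_ite, mul_one, mul_zero, edgesIn, Finset.sum_filter]

lemma two_mul_choose_two : ∀ t : ℕ, 2 * t.choose 2 = t * (t - 1) := by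
  intro t
  induction t with
  | zero => rfl
  | succ k ih =>
    rw [Nat.choose_succ_succ, Nat.choose_one_right, Nat.mul_add, ih]
    cases k with
    | zero => rfl
    | succ j => simp only [Nat.succ_sub_one]; ring

lemma filter_diag_sym2 (T : Finset (Fin n)) :
    T.sym2.filter (fun e => e.IsDiag) = T.image Sym2.diag := by
  ext e
  induction e using Sym2.ind with
  | _ i j =>
    simp only [Finset.mem_filter, Finset.mk_mem_sym2_iff, Sym2.mk_isDiag_iff,
      Finset.mem_image]
    constructor
    · rintro ⟨⟨hi, hj⟩, rfl⟩; exact ⟨i, hi, rfl⟩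
    · rintro ⟨a, ha, h⟩
      rw [Sym2.diag, Sym2.eq_iff] at h
      rcases h with ⟨rfl, rfl⟩ | ⟨rfl, rfl⟩ <;> exact ⟨⟨ha, ha⟩, rfl⟩

lemma card_filter_not_diag (T : Finset (Fin n)) :
    (T.sym2.filter (fun e => ¬ e.IsDiag)).card = T.card.choose 2 := by
  have h1 := Finset.card_filter_add_card_filter_not
    (s := T.sym2) (p := fun e => e.IsDiag)
  have h2 : (T.sym2.filter (fun e => e.IsDiag)).card = T.card := by
    rw [filter_diag_sym2, Finset.card_image_of_injective _ Sym2.diag_injective]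
  have h3 := Finset.card_sym2 T
  have h4 : (T.card + 1).choose 2 = T.card + T.card.choose 2 := by
    rw [Nat.choose_succ_succ, Nat.choose_one_right]
  omega

lemma card_edgesIn (T : Finset (Fin n)) :
    (edgesIn T).card = T.card.choose 2 := by
  rw [← card_filter_not_diag]
  apply Finset.card_bij (fun e _ => e.1)
  · rintro ⟨e, he⟩ hmem
    simp only [edgesIn, Finset.mem_filter, Finset.mem_univ, true_and] at hmem
    simp only [Finset.mem_filter]
    exact ⟨hmem, he⟩
  · rintro ⟨e, he⟩ _ ⟨e', he'⟩ _ h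
    simpa using h
  · intro e hmem
    simp only [Finset.mem_filter] at hmem
    exact ⟨⟨e, hmem.2⟩,
      by simp only [edgesIn, Finset.mem_filter, Finset.mem_univ, true_and]; exact hmem.1, rfl⟩

lemma dotP_sub (x y z : CoordKn n → ℝ) :
    dotP (fun c => x c - y c) z = dotP x z - dotP y z := by
  simp [dotP, sub_mul, Finset.sum_sub_distrib]

lemma dotP_charVec_empty (x : CoordKn n → ℝ) :
    dotP x (charVec (∅ : Finset (Fin n))) = 0 := by
  rw [dot_charVec]
  have : edgesIn (∅ : Finset (Fin n)) = ∅ := by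
    ext e; simp [edgesIn, Finset.sym2_empty]
  simp [this]

lemma abs_dot_le (x : CoordKn n → ℝ) (T : Finset (Fin n)) :
    |dotP x (charVec T)| ≤ ∑ c, |x c| := by
  refine (Finset.abs_sum_le_sum_abs _ _).trans (Finset.sum_le_sum fun c _ => ?_)
  rw [abs_mul]
  calc |x c| * |charVec T c| ≤ |x c| * 1 := by
        refine mul_le_mul_of_nonneg_left ?_ (abs_nonneg _)
        rw [abs_of_nonneg (charVec_nonneg T c)]
        exact charVec_le_one T c
    _ = |x c| := mul_one _

lemma dot_price_subset (A T : Finset (Fin n)) (hT : T ⊆ A) (c0 d M : ℝ) :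
    dotP (Sum.elim (fun i => if i ∈ A then c0 else M)
          (fun e : EdgeKn n => if e.1 ∈ A.sym2 then d else M)) (charVec T)
      = c0 * T.card + d * (T.card.choose 2 : ℕ) := by
  rw [dot_charVec]
  have h1 : (∑ i ∈ T, Sum.elim (fun i => if i ∈ A then c0 else M)
      (fun e : EdgeKn n => if e.1 ∈ A.sym2 then d else M) (Sum.inl i)) = c0 * T.card := by
    rw [Finset.sum_congr rfl (g := fun _ => c0)
      (fun i hi => by simp only [Sum.elim_inl]; exact if_pos (hT hi))]
    rw [Finset.sum_const, nsmul_eq_mul, mul_comm]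
  have h2 : (∑ e ∈ edgesIn T, Sum.elim (fun i => if i ∈ A then c0 else M)
      (fun e : EdgeKn n => if e.1 ∈ A.sym2 then d else M) (Sum.inr e))
      = d * (T.card.choose 2 : ℕ) := by
    rw [Finset.sum_congr rfl (g := fun _ => d) (fun e he => by
      simp only [Sum.elim_inr]
      refine if_pos (Finset.sym2_mono hT ?_)
      simpa only [edgesIn, Finset.mem_filter, Finset.mem_univ, true_and] using he)]
    rw [Finset.sum_const, card_edgesIn, nsmul_eq_mul, mul_comm]
  rw [h1, h2]

end Aux

set_option maxHeartbeats 1000000 in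
/-- **Theorem 1.2 (Main theorem).** For any `n ≥ 1`, `m ≥ 1`, weight vectors
`w^1, …, w^m ∈ ℝ^d` (graphical valuations on `K_n`) and any bundle
`a* ∈ {0,1}^n`, there exist an anonymous graphical price `p ∈ ℝ^d` and
pairwise disjoint sets `S^1, …, S^m ⊆ [n]` whose union is `{i : a*_i = 1}`,
such that `S^b ∈ D(w^b, p)` for every `b`; i.e. a competitive equilibrium
exists at `a*`. -/
theorem stmt0 (n m : ℕ) (hn : 1 ≤ n) (hm : 1 ≤ m)
    (w : Fin m → (CoordKn n → ℝ)) (astar : Fin n → ℝ)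
    (ha : ∀ i, astar i = 0 ∨ astar i = 1) :
    ∃ (p : CoordKn n → ℝ) (S : Fin m → Finset (Fin n)),
      (∀ b b' : Fin m, b ≠ b' → Disjoint (S b) (S b')) ∧
      (∀ i : Fin n, (∃ b, i ∈ S b) ↔ astar i = 1) ∧
      (∀ b, InDemand (w b) p (S b)) := by
  classical
  set A : Finset (Fin n) := Finset.univ.filter (fun i => astar i = 1) with hAdef
  have hmemA : ∀ i, i ∈ A ↔ astar i = 1 := fun i => by simp [hAdef]
  obtain ⟨bstar, -, hbstar⟩ := Finset.exists_max_image Finset.univ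
    (fun b => dotP (w b) (charVec A)) ⟨⟨0, hm⟩, Finset.mem_univ _⟩
  set W : ℝ := 1 + ∑ b, ∑ c, |w b c| with hWdef
  have hsums : ∀ b, (0:ℝ) ≤ ∑ c, |w b c| :=
    fun b => Finset.sum_nonneg fun c _ => abs_nonneg _
  have hW1 : (1:ℝ) ≤ W := by
    rw [hWdef]
    have : (0:ℝ) ≤ ∑ b, ∑ c, |w b c| := Finset.sum_nonneg fun b _ => hsums b
    linarith
  have habs : ∀ b, (∑ c, |w b c|) ≤ W - 1 := by
    intro b
    have h := Finset.single_le_sum (f := fun b' => ∑ c, |w b' c|)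
      (fun b' _ => hsums b') (Finset.mem_univ b)
    rw [hWdef]; linarith
  have hwc : ∀ b c, |w b c| ≤ W - 1 := fun b c =>
    (Finset.single_le_sum (fun c _ => abs_nonneg _) (Finset.mem_univ c)).trans (habs b)
  have hu : ∀ b T, |dotP (w b) (charVec T)| ≤ W - 1 :=
    fun b T => (Aux.abs_dot_le _ _).trans (habs b)
  set π : ℝ := dotP (w bstar) (charVec A) with hπdef
  set a : ℕ := A.card with hadef
  set R : ℝ := W + |π| with hRdef
  have hR0 : (0:ℝ) ≤ R := by rw [hRdef]; have := abs_nonneg π; linarith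
  set c0 : ℝ := π / a + R * ((a:ℝ) - 1) with hc0def
  set B : ℝ := |c0| + 2 * R with hBdef
  have hB0 : (0:ℝ) ≤ B := by rw [hBdef]; have := abs_nonneg c0; linarith
  set D : ℕ := Fintype.card (CoordKn n) with hDdef
  have hDB0 : (0:ℝ) ≤ (D:ℕ) * B := mul_nonneg (Nat.cast_nonneg D) hB0
  set M : ℝ := 2 * W + D * B with hMdef
  set p : CoordKn n → ℝ := Sum.elim (fun i => if i ∈ A then c0 else M)
    (fun e : EdgeKn n => if e.1 ∈ A.sym2 then -(2*R) else M) with hpdef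
  have hprice : ∀ T, T ⊆ A → dotP p (charVec T)
      = c0 * T.card + (-(2*R)) * (T.card.choose 2 : ℕ) := by
    intro T hT
    rw [hpdef]
    exact Aux.dot_price_subset A T hT c0 (-(2*R)) M
  have hchoose : ∀ t : ℕ, 1 ≤ t → 2 * ((t.choose 2 : ℕ) : ℝ) = (t:ℝ) * ((t:ℝ) - 1) := by
    intro t ht
    have h := Aux.two_mul_choose_two t
    have h2 : ((2 * t.choose 2 : ℕ) : ℝ) = ((t * (t - 1) : ℕ) : ℝ) := by rw [h]
    push_cast [Nat.cast_sub ht] at h2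
    linarith
  have hAkey : c0 * a - 2 * R * ((a.choose 2 : ℕ):ℝ) = π := by
    rcases Nat.eq_zero_or_pos a with h0 | h1
    · have hAe : A = ∅ := Finset.card_eq_zero.mp h0
      have hπ0 : π = 0 := by rw [hπdef, hAe, Aux.dotP_charVec_empty]
      simp [h0, hπ0]
    · have hne : (a:ℝ) ≠ 0 := Nat.cast_ne_zero.mpr (by omega)
      have hdv : π / a * a = π := div_mul_cancel₀ π hne
      have hc := hchoose a h1
      rw [hc0def]
      linear_combination hdv - R * hc
  -- main estimate
  have main : ∀ b T, dotP (fun c => w b c - p c) (charVec T) ≤ 0 := by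
    intro b T
    rw [Aux.dotP_sub]
    by_cases hTA : T ⊆ A
    · rw [hprice T hTA]
      by_cases hT : T = A
      · subst hT
        have hb := hbstar b (Finset.mem_univ b)
        linarith [hAkey]
      · rcases Nat.eq_zero_or_pos T.card with h0 | h1
        · have hTe : T = ∅ := Finset.card_eq_zero.mp h0
          subst hTe
          simp [Aux.dotP_charVec_empty]
        · have htlt : T.card < a := Finset.card_lt_card (ssubset_of_subset_of_ne hTA hT)
          have hub : dotP (w b) (charVec T) ≤ W - 1 := (le_abs_self _).trans (hu b T)
          have ht1 : (1:ℝ) ≤ (T.card:ℝ) := by exact_mod_cast h1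
          have hta : (T.card:ℝ) + 1 ≤ (a:ℝ) := by exact_mod_cast htlt
          have ha0 : (0:ℝ) < (a:ℝ) := by linarith
          have hπt : -|π| ≤ π / (a:ℝ) * (T.card:ℝ) := by
            have h1' : |π / (a:ℝ) * (T.card:ℝ)| ≤ |π| := by
              rw [abs_mul, abs_div, abs_of_nonneg (le_of_lt ha0),
                abs_of_nonneg (by linarith : (0:ℝ) ≤ (T.card:ℝ))]
              rw [div_mul_eq_mul_div, div_le_iff₀ ha0]
              exact mul_le_mul_of_nonneg_left (by linarith) (abs_nonneg _)
            linarith [(abs_le.mp h1').1]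
          have hchoose' := hchoose T.card h1
          have hprod : (1:ℝ) ≤ (T.card:ℝ) * ((a:ℝ) - (T.card:ℝ)) := by nlinarith
          have hkey : W ≤ c0 * (T.card:ℝ) - 2*R*((T.card.choose 2 : ℕ):ℝ) := by
            rw [hc0def]
            have e1 : (π/(a:ℝ) + R*((a:ℝ)-1))*(T.card:ℝ) - 2*R*((T.card.choose 2:ℕ):ℝ)
                = π/(a:ℝ)*(T.card:ℝ) + R*((T.card:ℝ)*((a:ℝ)-(T.card:ℝ))) := by
              linear_combination (-R) * hchoose'
            rw [e1]
            have hRprod : R * 1 ≤ R * ((T.card:ℝ)*((a:ℝ)-(T.card:ℝ))) :=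
              mul_le_mul_of_nonneg_left hprod hR0
            rw [hRdef] at hRprod ⊢
            nlinarith [hRprod, hπt]
          linarith
    · obtain ⟨i0, hi0T, hi0A⟩ := Finset.not_subset.mp hTA
      set f : CoordKn n → ℝ := fun c => (w b c - p c) * charVec T c with hfdef
      have hg : dotP (w b) (charVec T) - dotP p (charVec T) = ∑ c, f c := by
        rw [← Aux.dotP_sub]; rfl
      rw [hg]
      set Ins : CoordKn n → Prop :=
        fun c => Sum.elim (fun i => i ∈ A) (fun e : EdgeKn n => e.1 ∈ A.sym2) c with hInsdef
      rw [← Finset.sum_filter_add_sum_filter_not Finset.univ Ins f]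
      have hpB : ∀ c, Ins c → |p c| ≤ B := by
        intro c hc
        cases c with
        | inl i =>
          have hi : i ∈ A := hc
          rw [hpdef]; simp only [Sum.elim_inl, if_pos hi]
          rw [hBdef]; linarith [hR0]
        | inr e =>
          have he : e.1 ∈ A.sym2 := hc
          rw [hpdef]; simp only [Sum.elim_inr, if_pos he]
          rw [hBdef, abs_neg, abs_of_nonneg (by linarith : (0:ℝ) ≤ 2*R)]
          linarith [abs_nonneg c0]
      have hterm : ∀ c, Ins c → f c ≤ |w b c| + B := by
        intro c hc
        have h2 : |w b c - p c| ≤ |w b c| + |p c| := by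
          rw [sub_eq_add_neg]
          exact (abs_add_le _ _).trans (by rw [abs_neg])
        have h5 : |f c| = |w b c - p c| * |charVec T c| := by
          simp only [hfdef, abs_mul]
        calc f c ≤ |f c| := le_abs_self _
          _ = |w b c - p c| * |charVec T c| := h5
          _ ≤ (|w b c| + |p c|) * 1 := by
              refine mul_le_mul h2 ?_ (abs_nonneg _) (by positivity)
              rw [abs_of_nonneg (Aux.charVec_nonneg T c)]
              exact Aux.charVec_le_one T c
          _ = |w b c| + |p c| := mul_one _
          _ ≤ |w b c| + B := by linarith [hpB c hc]
      have hin : ∑ c ∈ Finset.univ.filter Ins, f c ≤ (W - 1) + D * B := by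
        calc ∑ c ∈ Finset.univ.filter Ins, f c
            ≤ ∑ c ∈ Finset.univ.filter Ins, (|w b c| + B) :=
              Finset.sum_le_sum (fun c hc => hterm c (Finset.mem_filter.mp hc).2)
          _ = (∑ c ∈ Finset.univ.filter Ins, |w b c|)
              + (Finset.univ.filter Ins).card • B := by
              rw [Finset.sum_add_distrib, Finset.sum_const]
          _ ≤ (W - 1) + D * B := by
              have h1 : ∑ c ∈ Finset.univ.filter Ins, |w b c| ≤ ∑ c, |w b c| :=
                Finset.sum_le_sum_of_subset_of_nonneg (Finset.filter_subset _ _)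
                  (fun c _ _ => abs_nonneg _)
              have h2 : (Finset.univ.filter Ins).card ≤ D := by
                rw [hDdef, ← Finset.card_univ]
                exact Finset.card_filter_le _ _
              have h3 : ((Finset.univ.filter Ins).card : ℝ) * B ≤ (D:ℕ) * B :=
                mul_le_mul_of_nonneg_right (by exact_mod_cast h2) hB0
              rw [nsmul_eq_mul]
              linarith [habs b]
      have hc1 : (Sum.inl i0 : CoordKn n) ∈ Finset.univ.filter (fun c => ¬ Ins c) := by
        simp only [Finset.mem_filter, Finset.mem_univ, true_and, hInsdef, Sum.elim_inl]
        exact hi0A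
      have hpM : ∀ c : CoordKn n, ¬ Ins c → p c = M := by
        intro c hc
        cases c with
        | inl i =>
          have : i ∉ A := fun h => hc h
          rw [hpdef]; simp only [Sum.elim_inl, if_neg this]
        | inr e =>
          have : e.1 ∉ A.sym2 := fun h => hc h
          rw [hpdef]; simp only [Sum.elim_inr, if_neg this]
      have hout : ∑ c ∈ Finset.univ.filter (fun c => ¬ Ins c), f c ≤ (W - 1) - M := by
        rw [← Finset.add_sum_erase _ f hc1]
        have hf1 : f (Sum.inl i0) ≤ (W - 1) - M := by
          simp only [hfdef]
          have hχ : charVec T (Sum.inl i0) = 1 := by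
            rw [Aux.charVec_inl, if_pos hi0T]
          have hpi : p (Sum.inl i0) = M := hpM _ (by
            simpa only [Finset.mem_filter, Finset.mem_univ, true_and] using hc1)
          rw [hχ, hpi, mul_one]
          have := hwc b (Sum.inl i0)
          linarith [le_abs_self (w b (Sum.inl i0))]
        have hrest : ∑ c ∈ (Finset.univ.filter (fun c => ¬ Ins c)).erase (Sum.inl i0),
            f c ≤ 0 := by
          refine Finset.sum_nonpos fun c hc => ?_
          have hIc : ¬ Ins c :=
            (Finset.mem_filter.mp (Finset.mem_of_mem_erase hc)).2
          simp only [hfdef]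
          refine mul_nonpos_of_nonpos_of_nonneg ?_ (Aux.charVec_nonneg T c)
          rw [hpM c hIc]
          have := hwc b c
          have := le_abs_self (w b c)
          rw [hMdef]
          linarith
        linarith
      rw [hMdef] at hout
      linarith [hin, hout]
  -- the allocation
  refine ⟨p, fun b => if b = bstar then A else ∅, ?_, ?_, ?_⟩
  · intro b b' hne
    dsimp only
    split_ifs with h1 h2 h2
    · exact absurd (h1.trans h2.symm) hne
    · exact Finset.disjoint_empty_right _
    · exact Finset.disjoint_empty_left _
    · exact Finset.disjoint_empty_left _
  · intro i
    constructor
    · rintro ⟨b, hb⟩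
      dsimp only at hb
      split_ifs at hb with h
      · exact (hmemA i).mp hb
      · exact absurd hb (Finset.notMem_empty i)
    · intro h
      refine ⟨bstar, ?_⟩
      show i ∈ if bstar = bstar then A else ∅
      rw [if_pos rfl]
      exact (hmemA i).mpr h
  · intro b
    have hS0 : dotP (fun c => w b c - p c) (charVec (if b = bstar then A else ∅)) = 0 := by
      split_ifs with h
      · subst h
        rw [Aux.dotP_sub, hprice A (subset_refl A)]
        rw [← hπdef]
        linarith [hAkey]
      · rw [Aux.dotP_charVec_empty]
    intro T
    show dotP (fun c => w b c - p c) (charVec T)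
      ≤ dotP (fun c => w b c - p c) (charVec (if b = bstar then A else ∅))
    rw [hS0]
    exact main b T
end

section
/- Let n ≥ 1, m ≥ 1, and a* ∈ {0,1,…,m}^n. Then there exists a ∈ ℤ^d ∩ m·P(K_n) with π(a) = a* such that for all weight vectors w^1,…,w^m ∈ ℝ^d there exist a price vector p ∈ ℝ^d and subsets S^1,…,S^m ⊆ [n] with S^b ∈ D(w^b, p) for every b ∈ [m] and ∑_{b=1}^m a_{S^b} = a. That is, when all valuations are graphical with underlying graph K_n, a competitive equilibrium at the bundle a* always exists. -/
lemma charVec_inl {n : ℕ} (S : Finset (Fin n)) (i : Fin n) :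
    charVec S (Sum.inl i) = if i ∈ S then 1 else 0 := rfl

lemma charVec_inr {n : ℕ} (S : Finset (Fin n)) (e : EdgeKn n) :
    charVec S (Sum.inr e) = if e.1 ∈ S.sym2 then 1 else 0 := by
  obtain ⟨e, he⟩ := e
  induction e using Sym2.ind with
  | _ i j => simp [charVec, Finset.mk_mem_sym2_iff]

lemma charVec_int {n : ℕ} (S : Finset (Fin n)) (c : CoordKn n) :
    ∃ z : ℤ, charVec S c = (z : ℝ) := by
  cases c with
  | inl i =>
    rw [charVec_inl]; split
    · exact ⟨1, by norm_num⟩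
    · exact ⟨0, by norm_num⟩
  | inr e =>
    rw [charVec_inr]; split
    · exact ⟨1, by norm_num⟩
    · exact ⟨0, by norm_num⟩

lemma dotP_split {n : ℕ} (x : CoordKn n → ℝ) (T : Finset (Fin n)) :
    dotP x (charVec T) =
      (∑ v ∈ T, x (Sum.inl v)) + ∑ e : EdgeKn n, x (Sum.inr e) * charVec T (Sum.inr e) := by
  rw [dotP, Fintype.sum_sum_type]
  congr 1
  have : ∀ v : Fin n, x (Sum.inl v) * charVec T (Sum.inl v)
      = if v ∈ T then x (Sum.inl v) else 0 := by
    intro v; rw [charVec_inl]; split <;> simp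
  rw [Finset.sum_congr rfl (fun v _ => this v), Finset.sum_ite_mem]
  simp

lemma edge_count {n : ℕ} (T : Finset (Fin n)) :
    ∑ e : EdgeKn n, charVec T (Sum.inr e) = (T.card.choose 2 : ℝ) := by
  classical
  have h1 : ∑ e : EdgeKn n, charVec T (Sum.inr e)
      = ((Finset.univ.filter (fun e : EdgeKn n => e.1 ∈ T.sym2)).card : ℝ) := by
    rw [Finset.card_filter]
    push_cast
    refine Finset.sum_congr rfl (fun e _ => ?_)
    rw [charVec_inr]
  rw [h1]
  have h2 : (Finset.univ.filter (fun e : EdgeKn n => e.1 ∈ T.sym2)).card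
      = (T.sym2.filter (fun e => ¬ e.IsDiag)).card := by
    apply Finset.card_nbij (fun e => e.1)
    · intro e he
      simp only [Finset.mem_coe, Finset.mem_filter, Finset.mem_univ, true_and] at he
      simp only [Finset.mem_coe, Finset.mem_filter]
      exact ⟨he, e.2⟩
    · intro e _ e' _ h; exact Subtype.ext h
    · intro e he
      simp only [Finset.coe_filter, Finset.mem_univ, true_and, Set.mem_setOf_eq,
        Finset.mem_coe, Finset.mem_filter] at he ⊢
      exact ⟨⟨e, he.2⟩, he.1, rfl⟩
  rw [h2]
  have h3 : (T.sym2.filter (fun e => e.IsDiag)).card = T.card := by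
    apply Finset.card_nbij' (fun e => e.sup) (fun a => Sym2.diag a)
    · intro e he
      rw [Finset.mem_coe, Finset.mem_filter] at he
      obtain ⟨a, ha⟩ : ∃ a, Sym2.diag a = e := ⟨_, Sym2.diag_diagElem he.2⟩
      subst ha
      have := Finset.mem_sym2_iff.mp he.1 a (by exact Sym2.mem_mk_left a a)
      simpa [Sym2.diag] using this
    · intro a ha
      rw [Finset.mem_coe, Finset.mem_filter]
      exact ⟨Finset.diag_mem_sym2_iff.mpr ha, Sym2.diag_isDiag a⟩
    · intro e he
      rw [Finset.mem_coe, Finset.mem_filter] at he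
      obtain ⟨a, ha⟩ : ∃ a, Sym2.diag a = e := ⟨_, Sym2.diag_diagElem he.2⟩
      subst ha
      simp [Sym2.diag]
    · intro a _; simp [Sym2.diag]
  have h4 := Finset.card_filter_add_card_filter_not
    (s := T.sym2) (p := fun e => e.IsDiag)
  have h5 : T.sym2.card = (T.card + 1).choose 2 := Finset.card_sym2 T
  have h6 : (T.card + 1).choose 2 = T.card.choose 1 + T.card.choose 2 := Nat.choose_succ_succ _ _
  have h7 : T.card.choose 1 = T.card := Nat.choose_one_right _
  have : (T.sym2.filter (fun e => ¬ e.IsDiag)).card = T.card.choose 2 := by omega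
  rw [this]


lemma sum_range_id_eq_choose (j : ℕ) : ∑ k ∈ Finset.range j, k = j.choose 2 := by
  induction j with
  | zero => simp
  | succ j ih =>
    rw [Finset.sum_range_succ, ih, Nat.choose_succ_succ]
    simp [Nat.choose_one_right]
    omega

lemma sum_range_card_le (I : Finset ℕ) : ∑ k ∈ Finset.range I.card, k ≤ ∑ x ∈ I, x := by
  generalize hn : I.card = t'
  induction t' generalizing I with
  | zero => simp
  | succ t ih =>
    have hne : I.Nonempty := Finset.card_pos.mp (by omega)
    set M := I.max' hne with hM
    have hsub : I ⊆ Finset.range (M + 1) := by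
      intro x hx
      rw [Finset.mem_range]
      exact Nat.lt_succ_of_le (Finset.le_max' I x hx)
    have hcard : I.card ≤ M + 1 := by
      calc I.card ≤ (Finset.range (M+1)).card := Finset.card_le_card hsub
      _ = M + 1 := by simp
    have hMI : M ∈ I := I.max'_mem hne
    have herase : (I.erase M).card = t := by rw [Finset.card_erase_of_mem hMI]; omega
    have := ih (I.erase M) herase
    have hsumI : ∑ x ∈ I, x = M + ∑ x ∈ I.erase M, x := (Finset.add_sum_erase I id hMI).symm
    rw [Finset.sum_range_succ, hsumI]
    omega

/-- A lower set in `Fin n` is an initial segment. -/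
lemma lowerset_initseg {n : ℕ} (s : Finset (Fin n))
    (hs : ∀ i j : Fin n, i ≤ j → j ∈ s → i ∈ s) (i : Fin n) :
    i ∈ s ↔ i.val < s.card := by
  constructor
  · intro hi
    have hsub : Finset.Iic i ⊆ s := fun j hj => hs j i (Finset.mem_Iic.mp hj) hi
    have := Finset.card_le_card hsub
    rw [Fin.card_Iic] at this
    omega
  · intro hlt
    by_contra hi
    have hsub : s ⊆ Finset.Iio i := by
      intro j hj
      rw [Finset.mem_Iio]
      rcases lt_or_ge j i with h | h
      · exact h
      · exact absurd (hs i j h hj) hi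
    have := Finset.card_le_card hsub
    rw [Fin.card_Iio] at this
    omega


def rankOf {n : ℕ} (σ : Equiv.Perm (Fin n)) (v : Fin n) : ℕ := (σ.symm v : ℕ)

def prefixSet {n : ℕ} (σ : Equiv.Perm (Fin n)) (j : ℕ) : Finset (Fin n) :=
  Finset.univ.filter (fun v => rankOf σ v < j)

lemma rankOf_injective {n : ℕ} (σ : Equiv.Perm (Fin n)) : Function.Injective (rankOf σ) :=
  fun v w h => σ.symm.injective (Fin.ext h)

lemma prefix_reindex {n : ℕ} {M : Type*} [AddCommMonoid M] (σ : Equiv.Perm (Fin n)) {j : ℕ} (hj : j ≤ n) (F : ℕ → M) :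
    ∑ v ∈ prefixSet σ j, F (rankOf σ v) = ∑ k ∈ Finset.range j, F k := by
  refine Finset.sum_bij' (fun v _ => rankOf σ v)
    (fun k hk => σ ⟨k, lt_of_lt_of_le (Finset.mem_range.mp hk) hj⟩) ?_ ?_ ?_ ?_ ?_
  · intro v hv
    simp only [prefixSet, Finset.mem_filter] at hv
    exact Finset.mem_range.mpr hv.2
  · intro k hk
    simp only [prefixSet, Finset.mem_coe, Finset.mem_filter, Finset.mem_univ, true_and]
    simp [rankOf, Finset.mem_range.mp hk]
  · intro v hv
    simp [rankOf]
  · intro k hk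
    simp [rankOf]
  · intro v hv
    rfl

lemma card_prefixSet {n : ℕ} (σ : Equiv.Perm (Fin n)) {j : ℕ} (hj : j ≤ n) :
    (prefixSet σ j).card = j := by
  have := prefix_reindex σ hj (fun _ => 1)
  simpa using this

lemma sum_rank_prefixSet {n : ℕ} (σ : Equiv.Perm (Fin n)) {j : ℕ} (hj : j ≤ n) :
    ∑ v ∈ prefixSet σ j, rankOf σ v = j.choose 2 := by
  rw [prefix_reindex σ hj (fun k => k), sum_range_id_eq_choose]

lemma sum_rank_ge {n : ℕ} (σ : Equiv.Perm (Fin n)) (T : Finset (Fin n)) :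
    T.card.choose 2 ≤ ∑ v ∈ T, rankOf σ v ∧
    (T ≠ prefixSet σ T.card → T.card.choose 2 + 1 ≤ ∑ v ∈ T, rankOf σ v) := by
  classical
  set I := T.image (rankOf σ) with hI
  have hcard : I.card = T.card := Finset.card_image_of_injective T (rankOf_injective σ)
  have hsum : ∑ x ∈ I, x = ∑ v ∈ T, rankOf σ v :=
    Finset.sum_image (fun v _ w _ h => rankOf_injective σ h)
  have hge : T.card.choose 2 ≤ ∑ v ∈ T, rankOf σ v := by
    have := sum_range_card_le I
    rw [hcard, hsum, sum_range_id_eq_choose] at this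
    exact this
  refine ⟨hge, ?_⟩
  intro hT
  by_cases hall : ∀ x ∈ I, x < T.card
  · -- then I = range T.card and T = prefixSet
    exfalso
    have hsub : I ⊆ Finset.range T.card := fun x hx => Finset.mem_range.mpr (hall x hx)
    have hIeq : I = Finset.range T.card := Finset.eq_of_subset_of_card_le hsub (by simp [hcard])
    apply hT
    ext v
    simp only [prefixSet, Finset.mem_filter, Finset.mem_univ, true_and]
    constructor
    · intro hv
      have : rankOf σ v ∈ I := Finset.mem_image_of_mem _ hv
      rw [hIeq, Finset.mem_range] at this
      exact this
    · intro hv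
      have : rankOf σ v ∈ I := by rw [hIeq, Finset.mem_range]; exact hv
      obtain ⟨u, hu, huv⟩ := Finset.mem_image.mp this
      rwa [← rankOf_injective σ huv]
  · push_neg at hall
    obtain ⟨x, hxI, hx⟩ := hall
    have hne : I.Nonempty := ⟨x, hxI⟩
    have ht1 : 1 ≤ T.card := by
      rw [← hcard]
      exact Finset.card_pos.mpr hne
    have hsumx : ∑ y ∈ I, y = x + ∑ y ∈ I.erase x, y := (Finset.add_sum_erase I id hxI).symm
    have herase : (I.erase x).card = T.card - 1 := by
      rw [Finset.card_erase_of_mem hxI, hcard]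
    have h2 := sum_range_card_le (I.erase x)
    rw [herase, sum_range_id_eq_choose] at h2
    have hpascal : T.card.choose 2 = (T.card - 1) + (T.card - 1).choose 2 := by
      obtain ⟨t, ht⟩ : ∃ t, T.card = t + 1 := ⟨T.card - 1, by omega⟩
      rw [ht, Nat.choose_succ_succ, Nat.choose_one_right]
      simp [Nat.add_sub_cancel]
    omega

lemma exists_sorting {n m : ℕ} (astar : Fin n → ℕ) (ha : ∀ i, astar i ≤ m) :
    ∃ σ : Equiv.Perm (Fin n), ∀ i j : Fin n, i ≤ j → astar (σ j) ≤ astar (σ i) := by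
  refine ⟨Tuple.sort (fun i => m - astar i), fun i j hij => ?_⟩
  have h := Tuple.monotone_sort (fun i => m - astar i) hij
  simp only [Function.comp_apply] at h
  have h1 := ha (Tuple.sort (fun i => m - astar i) i)
  have h2 := ha (Tuple.sort (fun i => m - astar i) j)
  omega

lemma upper_eq_prefix {n : ℕ} (astar : Fin n → ℕ) (σ : Equiv.Perm (Fin n))
    (hσ : ∀ i j : Fin n, i ≤ j → astar (σ j) ≤ astar (σ i)) (k : ℕ) :
    (Finset.univ.filter (fun v => k ≤ astar v)) =
      prefixSet σ ((Finset.univ.filter (fun v : Fin n => k ≤ astar v)).card) := by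
  classical
  set U := Finset.univ.filter (fun v : Fin n => k ≤ astar v) with hU
  set s := Finset.univ.filter (fun i : Fin n => k ≤ astar (σ i)) with hs
  have hlow : ∀ i j : Fin n, i ≤ j → j ∈ s → i ∈ s := by
    intro i j hij hj
    simp only [hs, Finset.mem_filter, Finset.mem_univ, true_and] at *
    exact le_trans hj (hσ i j hij)
  have hcards : s.card = U.card := by
    apply Finset.card_nbij (fun i => σ i)
    · intro i hi
      simp only [hs, hU, Finset.mem_coe, Finset.mem_filter, Finset.mem_univ, true_and] at *
      exact hi
    · intro i _ j _ h
      exact σ.injective h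
    · intro v hv
      simp only [hU, Finset.coe_filter, Finset.mem_univ, true_and, Set.mem_setOf_eq] at hv
      refine ⟨σ.symm v, ?_, by simp⟩
      simp only [hs, Finset.coe_filter, Finset.mem_univ, true_and, Set.mem_setOf_eq,
        Set.mem_image]
      simpa using hv
  ext v
  simp only [hU, prefixSet, Finset.mem_filter, Finset.mem_univ, true_and]
  have hvs := lowerset_initseg s hlow (σ.symm v)
  simp only [hs, Finset.mem_filter, Finset.mem_univ, true_and, Equiv.apply_symm_apply] at hvs
  rw [← hcards]
  exact hvs


section Assignment

variable {B J : Type} [Fintype B] [Fintype J] [DecidableEq B] [DecidableEq J]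

lemma sup'_sub_const {α : Type*} (s : Finset α) (hs : s.Nonempty) (f : α → ℝ) (r : ℝ) :
    s.sup' hs (fun a => f a - r) = s.sup' hs f - r := by
  apply le_antisymm
  · apply Finset.sup'_le
    intro a ha
    have := Finset.le_sup' f ha
    linarith
  · rw [sub_le_iff_le_add]
    apply Finset.sup'_le
    intro a ha
    have := Finset.le_sup' (fun a => f a - r) ha
    linarith

lemma assign_equil_pos [Nonempty B] [Nonempty J] (G : B → J → ℝ) (c : J → ℕ)
    (hc : ∑ j, c j = Fintype.card B) (hpos : ∀ j, 0 < c j) :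
    ∃ (T : J → ℝ) (f : B → J),
      (∀ b j, G b j - T j ≤ G b (f b) - T (f b)) ∧
      (∀ j, (Finset.univ.filter (fun b => f b = j)).card = c j) := by
  classical
  have neJ : (Finset.univ : Finset J).Nonempty := Finset.univ_nonempty
  have neB : (Finset.univ : Finset B).Nonempty := Finset.univ_nonempty
  set m := Fintype.card B with hmdef
  have hm : 0 < m := Fintype.card_pos
  set sup : (J → ℝ) → B → ℝ := fun T b => Finset.univ.sup' neJ (fun j => G b j - T j) with hsup
  set L : (J → ℝ) → ℝ := fun T => (∑ b, sup T b) + ∑ j, (c j : ℝ) * T j with hL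
  have hsumc : ∑ j, (c j : ℝ) = (m : ℝ) := by
    rw [← hc]; push_cast; rfl
  -- continuity
  have hLcont : Continuous L := by
    apply Continuous.add
    · apply continuous_finset_sum
      intro b _
      exact Continuous.finset_sup'_apply neJ
        (fun j _ => continuous_const.sub (continuous_apply j))
    · apply continuous_finset_sum
      intro j _
      exact continuous_const.mul (continuous_apply j)
  -- shift invariance
  have Lshift : ∀ (T : J → ℝ) (r : ℝ), L (fun j => T j + r) = L T := by
    intro T r
    have h1 : ∀ b, sup (fun j => T j + r) b = sup T b - r := by
      intro b
      have : (fun j => G b j - (T j + r)) = fun j => (G b j - T j) - r := by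
        funext j; ring
      rw [hsup]
      simp only [this]
      exact sup'_sub_const _ neJ _ r
    simp only [hL]
    rw [Finset.sum_congr rfl (fun b _ => h1 b), Finset.sum_sub_distrib]
    have h2 : ∑ j, (c j : ℝ) * (T j + r) = (∑ j, (c j : ℝ) * T j) + (m : ℝ) * r := by
      rw [← hsumc, Finset.sum_mul, ← Finset.sum_add_distrib]
      exact Finset.sum_congr rfl (fun j _ => by ring)
    rw [h2]
    have h3 : ∑ _b : B, r = (m : ℝ) * r := by
      rw [Finset.sum_const, Finset.card_univ, ← hmdef, nsmul_eq_mul]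
    rw [h3]
    ring
  -- bound A on |G|
  have neBJ : (Finset.univ : Finset (B × J)).Nonempty := Finset.univ_nonempty
  set A : ℝ := Finset.univ.sup' neBJ (fun bj : B × J => |G bj.1 bj.2|) with hA
  have hAbd : ∀ b j, |G b j| ≤ A := fun b j =>
    Finset.le_sup' (fun bj : B × J => |G bj.1 bj.2|) (Finset.mem_univ (b, j))
  have hA0 : 0 ≤ A := le_trans (abs_nonneg _) (hAbd (Classical.arbitrary B) (Classical.arbitrary J))
  obtain ⟨j₀⟩ := (inferInstance : Nonempty J)
  -- coercivity
  have hcoer : ∀ T : J → ℝ, T j₀ = 0 → ∀ j, |T j| ≤ L T + m * A := by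
    intro T hT0 j
    obtain ⟨jm, _, hjm⟩ := Finset.exists_min_image Finset.univ T neJ
    obtain ⟨jM, _, hjM⟩ := Finset.exists_max_image Finset.univ T neJ
    have h1 : ∀ b, -A - T jm ≤ sup T b := by
      intro b
      have := Finset.le_sup' (fun j => G b j - T j) (Finset.mem_univ jm)
      have := abs_le.mp (hAbd b jm)
      rw [hsup]
      dsimp only
      linarith [Finset.le_sup' (fun j => G b j - T j) (Finset.mem_univ jm)]
    have h2 : (m : ℝ) * (-A - T jm) ≤ ∑ b, sup T b := by
      calc (m : ℝ) * (-A - T jm) = ∑ _b : B, (-A - T jm) := by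
            rw [Finset.sum_const, Finset.card_univ, ← hmdef, nsmul_eq_mul]
        _ ≤ ∑ b, sup T b := Finset.sum_le_sum (fun b _ => h1 b)
    have h3 : (T jM - T jm) + (m:ℝ) * T jm ≤ ∑ j, (c j : ℝ) * T j := by
      have e1 : ∑ j, (c j : ℝ) * T j = (∑ j, (c j : ℝ) * (T j - T jm)) + (m:ℝ) * T jm := by
        rw [← hsumc, Finset.sum_mul, ← Finset.sum_add_distrib]
        exact Finset.sum_congr rfl (fun j _ => by ring)
      rw [e1]
      have e2 : T jM - T jm ≤ (c jM : ℝ) * (T jM - T jm) := by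
        have h1c : (1:ℝ) ≤ (c jM : ℝ) := by exact_mod_cast hpos jM
        nlinarith [sub_nonneg.mpr (hjm jM (Finset.mem_univ jM))]
      have e3 : (c jM : ℝ) * (T jM - T jm) ≤ ∑ j, (c j : ℝ) * (T j - T jm) := by
        apply Finset.single_le_sum (f := fun j => (c j : ℝ) * (T j - T jm))
        · intro j _
          apply mul_nonneg (Nat.cast_nonneg _)
          linarith [hjm j (Finset.mem_univ j)]
        · exact Finset.mem_univ jM
      linarith
    have h4 : |T j| ≤ T jM - T jm := by
      have k1 := hjm j (Finset.mem_univ j)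
      have k2 := hjM j (Finset.mem_univ j)
      have k3 := hjm j₀ (Finset.mem_univ j₀)
      have k4 := hjM j₀ (Finset.mem_univ j₀)
      rw [hT0] at k3 k4
      rw [abs_le]
      constructor <;> linarith
    have : L T = (∑ b, sup T b) + ∑ j, (c j : ℝ) * T j := rfl
    linarith
  -- minimizer over compact set
  set R : ℝ := |L 0| + m * A + 1 with hR
  have hRpos : 0 < R := by positivity
  set K : Set (J → ℝ) :=
    (Set.univ.pi (fun _ : J => Set.Icc (-R) R)) ∩ {T | T j₀ = 0} with hK
  have hKc : IsCompact K := by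
    apply IsCompact.inter_right
    · exact isCompact_univ_pi (fun j => isCompact_Icc)
    · exact isClosed_eq (continuous_apply j₀) continuous_const
  have hK0 : (0 : J → ℝ) ∈ K := by
    constructor
    · intro j _
      constructor <;> simp <;> linarith
    · rfl
  obtain ⟨Tm, hTmK, hTmmin⟩ := hKc.exists_isMinOn ⟨0, hK0⟩ hLcont.continuousOn
  -- global minimality
  have hmin : ∀ T : J → ℝ, L Tm ≤ L T := by
    intro T
    set T' : J → ℝ := fun j => T j + (-(T j₀)) with hT'
    have hLT' : L T' = L T := Lshift T (-(T j₀))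
    have hT'0 : T' j₀ = 0 := by simp [hT']
    by_cases hT'K : T' ∈ K
    · exact le_of_le_of_eq (hTmmin hT'K) hLT'
    · have : ∃ j, R < |T' j| := by
        by_contra hno
        push_neg at hno
        apply hT'K
        constructor
        · intro j _
          exact abs_le.mp (hno j)
        · exact hT'0
      obtain ⟨j, hj⟩ := this
      have := hcoer T' hT'0 j
      have hL0 : L Tm ≤ L 0 := hTmmin hK0
      have : |L 0| + 1 ≤ L T' := by
        rw [hR] at hj
        linarith
      rw [hLT'] at this
      have : L 0 ≤ L T := by
        have := abs_nonneg (L 0)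
        linarith [le_abs_self (L 0)]
      linarith
  -- demand sets
  set maxval : B → ℝ := fun b => sup Tm b with hmaxval
  set D : B → Finset J := fun b => Finset.univ.filter (fun j => maxval b ≤ G b j - Tm j) with hD
  have hle : ∀ b j, G b j - Tm j ≤ maxval b := by
    intro b j
    exact Finset.le_sup' (fun j => G b j - Tm j) (Finset.mem_univ j)
  have hDne : ∀ b, (D b).Nonempty := by
    intro b
    obtain ⟨j, _, hj⟩ := Finset.exists_mem_eq_sup' neJ (fun j => G b j - Tm j)
    refine ⟨j, ?_⟩
    simp only [hD, Finset.mem_filter, Finset.mem_univ, true_and, hmaxval, hsup]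
    exact le_of_eq hj
  -- epsilon with gap
  obtain ⟨ε, hε, hgap⟩ : ∃ ε : ℝ, 0 < ε ∧
      ∀ b j, j ∉ D b → G b j - Tm j + 2 * ε ≤ maxval b := by
    set P := (Finset.univ : Finset (B × J)).filter (fun bj => bj.2 ∉ D bj.1) with hP
    by_cases hPne : P.Nonempty
    · refine ⟨P.inf' hPne (fun bj => maxval bj.1 - (G bj.1 bj.2 - Tm bj.2)) / 2, ?_, ?_⟩
      · apply div_pos _ two_pos
        rw [Finset.lt_inf'_iff]
        intro bj hbj
        simp only [hP, Finset.mem_filter, Finset.mem_univ, true_and] at hbj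
        simp only [hD, Finset.mem_filter, Finset.mem_univ, true_and, not_le] at hbj
        linarith
      · intro b j hj
        have hmem : (b, j) ∈ P := by simp [hP, hj]
        have := Finset.inf'_le (fun bj : B × J => maxval bj.1 - (G bj.1 bj.2 - Tm bj.2)) hmem
        linarith
    · refine ⟨1, one_pos, fun b j hj => absurd ⟨(b, j), by simp [hP, hj]⟩ hPne⟩
  -- Hall condition
  set t : B → Finset ((j : J) × Fin (c j)) :=
    fun b => Finset.univ.filter (fun x : (j : J) × Fin (c j) => x.1 ∈ D b) with ht
  have hHall : ∀ s : Finset B, s.card ≤ (s.biUnion t).card := by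
    by_contra hcon
    push_neg at hcon
    obtain ⟨s, hs⟩ := hcon
    set U := s.biUnion D with hU
    have hbi : s.biUnion t = U.sigma (fun _ => Finset.univ) := by
      ext ⟨j', y⟩
      simp only [Finset.mem_biUnion, ht, Finset.mem_filter, Finset.mem_univ, true_and,
        Finset.mem_sigma, hU, and_true]
    have hcardbi : (s.biUnion t).card = ∑ j ∈ U, c j := by
      rw [hbi, Finset.card_sigma]
      exact Finset.sum_congr rfl (fun j _ => by simp)
    rw [hcardbi] at hs
    -- perturbation
    set T' : J → ℝ := fun j => Tm j + (if j ∈ U then ε else 0) with hT'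
    have hsup' : ∀ b, sup T' b ≤ maxval b - (if b ∈ s then ε else 0) := by
      intro b
      apply Finset.sup'_le
      intro j _
      by_cases hjD : j ∈ D b
      · by_cases hbs : b ∈ s
        · have hjU : j ∈ U := Finset.mem_biUnion.mpr ⟨b, hbs, hjD⟩
          simp only [hT', hjU, if_pos, hbs]
          have := hle b j
          linarith
        · simp only [hT', if_neg hbs]
          have := hle b j
          split <;> linarith
      · have := hgap b j hjD
        simp only [hT']
        split <;> split <;> linarith
    have hsum1 : ∑ b, sup T' b ≤ (∑ b, maxval b) - ε * s.card := by
      calc ∑ b, sup T' b ≤ ∑ b, (maxval b - (if b ∈ s then ε else 0)) :=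
            Finset.sum_le_sum (fun b _ => hsup' b)
        _ = (∑ b, maxval b) - ε * s.card := by
            rw [Finset.sum_sub_distrib]
            congr 1
            rw [Finset.sum_ite_mem]
            simp [Finset.inter_comm]
            ring
    have hsum2 : ∑ j, (c j : ℝ) * T' j = (∑ j, (c j : ℝ) * Tm j) + ε * ∑ j ∈ U, (c j : ℝ) := by
      have : ∀ j, (c j : ℝ) * T' j = (c j : ℝ) * Tm j + (if j ∈ U then (c j : ℝ) * ε else 0) := by
        intro j
        simp only [hT']
        split <;> ring
      rw [Finset.sum_congr rfl (fun j _ => this j), Finset.sum_add_distrib]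
      congr 1
      rw [Finset.sum_ite_mem]
      simp [Finset.inter_comm]
      rw [Finset.mul_sum]
      exact Finset.sum_congr rfl (fun j _ => by ring)
    have hLT' : L T' ≤ L Tm - ε * (s.card - ∑ j ∈ U, (c j:ℝ)) := by
      have : L Tm = (∑ b, maxval b) + ∑ j, (c j : ℝ) * Tm j := rfl
      have hLT'def : L T' = (∑ b, sup T' b) + ∑ j, (c j : ℝ) * T' j := rfl
      rw [hLT'def, hsum2]
      have := hsum1
      nlinarith [this]
    have hclt : (∑ j ∈ U, (c j:ℝ)) < (s.card : ℝ) := by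
      have : ((∑ j ∈ U, c j : ℕ) : ℝ) < (s.card : ℝ) := by exact_mod_cast hs
      push_cast at this
      exact this
    have : L T' < L Tm := by nlinarith
    exact absurd (hmin T') (not_le.mpr this)
  obtain ⟨F, hFinj, hFmem⟩ := (Finset.all_card_le_biUnion_card_iff_exists_injective t).mp hHall
  have hcardγ : Fintype.card ((j : J) × Fin (c j)) = m := by
    rw [Fintype.card_sigma]
    simp [hc]
  have hFbij : Function.Bijective F :=
    (Fintype.bijective_iff_injective_and_card F).mpr ⟨hFinj, by rw [hcardγ]⟩
  refine ⟨Tm, fun b => (F b).1, ?_, ?_⟩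
  · intro b j
    have h1 := hle b j
    have h2 : (F b).1 ∈ D b := by
      have := hFmem b
      simp only [ht, Finset.mem_filter] at this
      exact this.2
    simp only [hD, Finset.mem_filter] at h2
    linarith [h2.2]
  · intro j
    have step1 : (Finset.univ.filter (fun b => (F b).1 = j)).card
        = (Finset.univ.filter (fun x : (j : J) × Fin (c j) => x.1 = j)).card := by
      apply Finset.card_nbij (fun b => F b)
      · intro b hb
        simp only [Finset.mem_coe, Finset.mem_filter, Finset.mem_univ, true_and] at *
        exact hb
      · intro b _ b' _ h
        exact hFinj h
      · intro x hx
        simp only [Finset.coe_filter, Finset.mem_univ, true_and, Set.mem_setOf_eq] at hx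
        obtain ⟨b, hb⟩ := hFbij.2 x
        refine ⟨b, ?_, hb⟩
        simp only [Finset.coe_filter, Finset.mem_univ, true_and, Set.mem_setOf_eq]
        rw [hb]
        exact hx
    have step2 : (Finset.univ.filter (fun x : (j : J) × Fin (c j) => x.1 = j)) =
        ({j} : Finset J).sigma (fun _ => Finset.univ) := by
      ext ⟨j', y⟩
      simp [Finset.mem_sigma, Finset.mem_singleton, Finset.mem_filter]
    rw [step1, step2, Finset.card_sigma]
    simp

lemma assign_equil [Nonempty B] [Nonempty J] (G : B → J → ℝ) (c : J → ℕ)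
    (hc : ∑ j, c j = Fintype.card B) :
    ∃ (T : J → ℝ) (f : B → J),
      (∀ b j, G b j - T j ≤ G b (f b) - T (f b)) ∧
      (∀ j, (Finset.univ.filter (fun b => f b = j)).card = c j) := by
  classical
  have hm : 0 < Fintype.card B := Fintype.card_pos
  have hex : ∃ j, c j ≠ 0 := by
    by_contra h
    push_neg at h
    rw [Finset.sum_congr rfl (fun j _ => h j)] at hc
    simp at hc
    omega
  haveI : Nonempty {j : J // c j ≠ 0} := ⟨⟨hex.choose, hex.choose_spec⟩⟩
  have neB : (Finset.univ : Finset B).Nonempty := Finset.univ_nonempty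
  have hc' : ∑ j' : {j : J // c j ≠ 0}, c j'.1 = Fintype.card B := by
    rw [← hc]
    rw [← Finset.sum_filter_ne_zero (s := Finset.univ) (f := c)]
    exact (Finset.sum_subtype _ (by intro x; simp) c).symm
  obtain ⟨T', f', hopt', hcount'⟩ := assign_equil_pos (fun b (j' : {j : J // c j ≠ 0}) => G b j'.1)
    (fun j' => c j'.1) hc' (fun j' => Nat.pos_of_ne_zero j'.2)
  set f : B → J := fun b => (f' b).1 with hf
  set T : J → ℝ := fun j =>
    if h : c j = 0 then Finset.univ.sup' neB (fun b => G b j - (G b (f b) - T' (f' b)))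
    else T' ⟨j, h⟩ with hT
  have hTfb : ∀ b, T (f b) = T' (f' b) := by
    intro b
    simp only [hT, hf, dif_neg (f' b).2]
  refine ⟨T, f, ?_, ?_⟩
  · intro b j
    rw [hTfb b]
    by_cases h : c j = 0
    · have hle : G b j - (G b (f b) - T' (f' b)) ≤ T j := by
        simp only [hT]
        rw [dif_pos h]
        exact Finset.le_sup' (f := fun b => G b j - (G b (f b) - T' (f' b)))
          (Finset.mem_univ b)
      linarith
    · have h2 := hopt' b ⟨j, h⟩
      have hTj : T j = T' ⟨j, h⟩ := by simp only [hT]; rw [dif_neg h]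
      rw [hTj]
      exact h2
  · intro j
    by_cases h : c j = 0
    · have hemp : Finset.univ.filter (fun b => f b = j) = ∅ := by
        apply Finset.filter_eq_empty_iff.mpr
        intro b _
        intro hbj
        have : c (f b) ≠ 0 := (f' b).2
        rw [hbj] at this
        exact this h
      rw [hemp, h]
      simp
    · rw [← hcount' ⟨j, h⟩]
      apply Finset.card_bij (fun b _ => b)
      · intro b hb
        simp only [Finset.mem_filter, Finset.mem_univ, true_and] at hb ⊢
        exact Subtype.ext hb
      · exact fun _ _ _ _ hh => hh
      · intro b hb
        simp only [Finset.mem_filter, Finset.mem_univ, true_and] at hb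
        refine ⟨b, ?_, rfl⟩
        simp only [Finset.mem_filter, Finset.mem_univ, true_and, hf, hb]

end Assignment


/-- **Theorem 3.3.** Let `a* ∈ {0,1,…,m}^n`, `n ≥ 1`, `m ≥ 1`. There exists a
lattice point `a ∈ ℤ^d ∩ m·P(K_n)` with `π(a) = a*` such that for all weight
vectors `w^1, …, w^m ∈ ℝ^d` there exist a price `p ∈ ℝ^d` and sets
`S^1, …, S^m ⊆ [n]` with `S^b ∈ D(w^b, p)` for every `b` and
`∑_b a_{S^b} = a`: a competitive equilibrium at `a*` always exists. -/
theorem stmt2 (n m : ℕ) (hn : 1 ≤ n) (hm : 1 ≤ m)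
    (astar : Fin n → ℕ) (ha : ∀ i, astar i ≤ m) :
    ∃ a : CoordKn n → ℝ,
      (∀ c, ∃ z : ℤ, a c = (z : ℝ)) ∧
      a ∈ dilate m (corrPolytope n) ∧
      (∀ i, a (Sum.inl i) = (astar i : ℝ)) ∧
      (∀ w : Fin m → (CoordKn n → ℝ),
        ∃ (p : CoordKn n → ℝ) (S : Fin m → Finset (Fin n)),
          (∀ b, InDemand (w b) p (S b)) ∧ (∑ b, charVec (S b)) = a) := by
  classical
  obtain ⟨σ, hσ⟩ := exists_sorting astar ha
  set U : ℕ → Finset (Fin n) := fun k => Finset.univ.filter (fun v => k ≤ astar v) with hUdef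
  have hUcard : ∀ k, (U k).card ≤ n := by
    intro k
    calc (U k).card ≤ (Finset.univ : Finset (Fin n)).card := Finset.card_le_univ _
      _ = n := by simp
  have hUP : ∀ k, U k = prefixSet σ ((U k).card) := fun k => upper_eq_prefix astar σ hσ k
  set a : CoordKn n → ℝ := ∑ k ∈ Finset.Icc 1 m, charVec (U k) with hadef
  have hmne : (m : ℝ) ≠ 0 := by positivity
  refine ⟨a, ?_, ?_, ?_, ?_⟩
  · -- integrality
    intro co
    have hZ : ∀ k, ∃ z : ℤ, charVec (U k) co = (z : ℝ) := fun k => charVec_int _ _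
    choose Z hZ using hZ
    refine ⟨∑ k ∈ Finset.Icc 1 m, Z k, ?_⟩
    rw [hadef, Finset.sum_apply]
    push_cast
    exact Finset.sum_congr rfl (fun k _ => hZ k)
  · -- dilate membership
    refine ⟨(m : ℝ)⁻¹ • a, ?_, (smul_inv_smul₀ hmne a).symm⟩
    rw [hadef, Finset.smul_sum]
    apply Convex.sum_mem (convex_convexHull ℝ _)
    · intro k _; positivity
    · rw [Finset.sum_const, Nat.card_Icc, add_tsub_cancel_right, nsmul_eq_mul]
      field_simp
    · intro k _
      exact subset_convexHull ℝ _ (Set.mem_range_self (U k))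
  · -- vertex coordinates
    intro i
    rw [hadef, Finset.sum_apply]
    have h1 : ∀ k ∈ Finset.Icc 1 m, charVec (U k) (Sum.inl i)
        = if k ≤ astar i then (1:ℝ) else 0 := by
      intro k _
      rw [charVec_inl]
      simp [hUdef]
    rw [Finset.sum_congr rfl h1, Finset.sum_boole]
    have h2 : (Finset.Icc 1 m).filter (fun k => k ≤ astar i) = Finset.Icc 1 (astar i) := by
      ext k
      simp only [Finset.mem_filter, Finset.mem_Icc]
      have := ha i
      omega
    rw [h2, Nat.card_Icc, add_tsub_cancel_right]
  · -- equilibrium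
    intro w
    haveI : Nonempty (Fin m) := ⟨⟨0, hm⟩⟩
    set ρ : ℕ → Fin (n+1) := fun k => ⟨(U k).card, Nat.lt_succ_of_le (hUcard k)⟩ with hρ
    set G : Fin m → Fin (n+1) → ℝ :=
      fun b j => dotP (w b) (charVec (prefixSet σ j.val)) with hG
    set c : Fin (n+1) → ℕ :=
      fun j => ((Finset.Icc 1 m).filter (fun k => ρ k = j)).card with hcdef
    have hcsum : ∑ j, c j = m := by
      have h := Finset.card_eq_sum_card_fiberwise
        (f := ρ) (s := Finset.Icc 1 m) (t := Finset.univ) (fun k _ => Finset.mem_univ _)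
      rw [Nat.card_Icc, add_tsub_cancel_right] at h
      exact h.symm
    obtain ⟨T, f, hopt, hcount⟩ := assign_equil (B := Fin m) (J := Fin (n+1)) G c
      (by rw [hcsum, Fintype.card_fin])
    -- prices
    set Tn : ℕ → ℝ := fun l => if h : l < n+1 then T ⟨l, h⟩ else 0 with hTn
    set p1 : CoordKn n → ℝ := fun co => Sum.elim
      (fun v => Tn (rankOf σ v + 1) - Tn (rankOf σ v)) (fun _ => (0:ℝ)) co with hp1
    set p0 : CoordKn n → ℝ := fun co => Sum.elim
      (fun v => (rankOf σ v : ℝ)) (fun _ => (-1:ℝ)) co with hp0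
    -- key computations
    have hfun_eq : ∀ T' : Finset (Fin n), dotP (fun co => -(p0 co)) (charVec T')
        = -(∑ v ∈ T', (rankOf σ v : ℝ)) + ((T'.card.choose 2 : ℕ) : ℝ) := by
      intro T'
      rw [dotP_split]
      congr 1
      · rw [← Finset.sum_neg_distrib]
        apply Finset.sum_congr rfl
        intro v _
        simp [hp0]
      · calc ∑ e : EdgeKn n, -(p0 (Sum.inr e)) * charVec T' (Sum.inr e)
            = ∑ e : EdgeKn n, charVec T' (Sum.inr e) := by
              apply Finset.sum_congr rfl
              intro e _
              simp [hp0]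
          _ = _ := edge_count T'
    have hfz : ∀ j : ℕ, j ≤ n → dotP (fun co => -(p0 co)) (charVec (prefixSet σ j)) = 0 := by
      intro j hj
      rw [hfun_eq, card_prefixSet σ hj]
      have := sum_rank_prefixSet σ hj
      have hcast : ∑ v ∈ prefixSet σ j, (rankOf σ v : ℝ) = ((j.choose 2 : ℕ) : ℝ) := by
        rw [← this]
        push_cast
        rfl
      rw [hcast]
      ring
    have hfneg : ∀ T' : Finset (Fin n), T' ≠ prefixSet σ T'.card →
        dotP (fun co => -(p0 co)) (charVec T') ≤ -1 := by
      intro T' hT'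
      rw [hfun_eq]
      have h := (sum_rank_ge σ T').2 hT'
      have hcast : ((T'.card.choose 2 + 1 : ℕ) : ℝ) ≤ ∑ v ∈ T', (rankOf σ v : ℝ) := by
        have : ((T'.card.choose 2 + 1 : ℕ) : ℝ) ≤ ((∑ v ∈ T', rankOf σ v : ℕ) : ℝ) := by
          exact_mod_cast h
        rw [Nat.cast_sum] at this
        exact this
      push_cast at hcast ⊢
      linarith
    have hp1val : ∀ j : ℕ, j ≤ n → dotP p1 (charVec (prefixSet σ j)) = Tn j - Tn 0 := by
      intro j hj
      rw [dotP_split]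
      have he : ∑ e : EdgeKn n, p1 (Sum.inr e) * charVec (prefixSet σ j) (Sum.inr e) = 0 := by
        apply Finset.sum_eq_zero
        intro e _
        simp [hp1]
      rw [he, add_zero]
      have hv : ∑ v ∈ prefixSet σ j, p1 (Sum.inl v)
          = ∑ v ∈ prefixSet σ j, (Tn (rankOf σ v + 1) - Tn (rankOf σ v)) := by
        apply Finset.sum_congr rfl
        intro v _
        simp [hp1]
      rw [hv, prefix_reindex σ hj (fun k => Tn (k+1) - Tn k), Finset.sum_range_sub]
    have hdecomp : ∀ (x : CoordKn n → ℝ) (Λ : ℝ) (T' : Finset (Fin n)),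
        dotP (fun co => x co - (Λ * p0 co + p1 co)) (charVec T')
        = (dotP x (charVec T') - dotP p1 (charVec T'))
          + Λ * dotP (fun co => -(p0 co)) (charVec T') := by
      intro x Λ T'
      simp only [dotP, Finset.mul_sum]
      rw [← Finset.sum_sub_distrib, ← Finset.sum_add_distrib]
      exact Finset.sum_congr rfl (fun co _ => by ring)
    -- bound
    have neBT : ((Finset.univ : Finset (Fin m × Finset (Fin n)))).Nonempty :=
      Finset.univ_nonempty
    set M : ℝ := Finset.univ.sup' neBT (fun bT : Fin m × Finset (Fin n) =>
      |dotP (w bT.1) (charVec bT.2) - dotP p1 (charVec bT.2)|) with hM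
    have hMbd : ∀ b T', |dotP (w b) (charVec T') - dotP p1 (charVec T')| ≤ M :=
      fun b T' => Finset.le_sup' (fun bT : Fin m × Finset (Fin n) =>
        |dotP (w bT.1) (charVec bT.2) - dotP p1 (charVec bT.2)|) (Finset.mem_univ (b, T'))
    have hM0 : 0 ≤ M := le_trans (abs_nonneg _) (hMbd ⟨0, hm⟩ ∅)
    set Λ : ℝ := 2 * M + 1 with hΛ
    have hΛ0 : 0 ≤ Λ := by rw [hΛ]; linarith
    set p : CoordKn n → ℝ := fun co => Λ * p0 co + p1 co with hp
    set S : Fin m → Finset (Fin n) := fun b => prefixSet σ ((f b) : ℕ) with hS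
    have hTnj : ∀ j : Fin (n+1), Tn j.val = T j := by
      intro j
      rw [hTn]
      simp only [j.isLt, dif_pos]
    have hprefval : ∀ (b : Fin m) (j : Fin (n+1)),
        dotP (fun co => w b co - p co) (charVec (prefixSet σ j.val))
          = G b j - (Tn j.val - Tn 0) := by
      intro b j
      rw [hp, hdecomp (w b) Λ, hfz j.val (Nat.lt_succ_iff.mp j.isLt),
        hp1val j.val (Nat.lt_succ_iff.mp j.isLt)]
      rw [hG]
      ring
    refine ⟨p, S, ?_, ?_⟩
    · -- demand
      intro b T'
      have hcardT' : T'.card ≤ n := by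
        calc T'.card ≤ (Finset.univ : Finset (Fin n)).card := Finset.card_le_univ _
          _ = n := by simp
      have hSb : dotP (fun co => w b co - p co) (charVec (S b))
          = G b (f b) - (Tn (f b).val - Tn 0) := hprefval b (f b)
      by_cases hTP : T' = prefixSet σ T'.card
      · rw [hTP]
        set j : Fin (n+1) := ⟨T'.card, Nat.lt_succ_of_le hcardT'⟩ with hj
        have h1 : dotP (fun co => w b co - p co) (charVec (prefixSet σ T'.card))
            = G b j - (Tn j.val - Tn 0) := hprefval b j
        rw [h1, hSb]
        have h2 := hopt b j
        rw [← hTnj j, ← hTnj (f b)] at h2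
        linarith
      · have h1 : dotP (fun co => w b co - p co) (charVec T')
            = (dotP (w b) (charVec T') - dotP p1 (charVec T'))
              + Λ * dotP (fun co => -(p0 co)) (charVec T') := by
          rw [hp, hdecomp]
        have h2 := hfneg T' hTP
        have h3 := hMbd b T'
        have h4 : Λ * dotP (fun co => -(p0 co)) (charVec T') ≤ Λ * (-1) :=
          mul_le_mul_of_nonneg_left h2 hΛ0
        have h5 := abs_le.mp h3
        have h6 := abs_le.mp (hMbd b (S b))
        have h7 : dotP (fun co => w b co - p co) (charVec (S b))
            = (dotP (w b) (charVec (S b)) - dotP p1 (charVec (S b))) := by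
          rw [hSb, hG, hS]
          rw [hp1val ((f b) : ℕ) (Nat.lt_succ_iff.mp (f b).isLt)]
        rw [h1, h7]
        linarith [hΛ]
    · -- the sum
      have key : ∀ {ι : Type} [DecidableEq ι] (g : ι → Fin (n+1)) (s : Finset ι),
          (∑ k ∈ s, charVec (prefixSet σ (g k).val))
          = ∑ j : Fin (n+1), ((s.filter (fun k => g k = j)).card)
              • charVec (prefixSet σ j.val) := by
        intro ι _ g s
        have h0 : s.filter (fun k => g k ∈ Finset.univ) = s :=
          Finset.filter_true_of_mem (fun k _ => Finset.mem_univ _)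
        calc ∑ k ∈ s, charVec (prefixSet σ (g k).val)
            = ∑ k ∈ s.filter (fun k => g k ∈ Finset.univ),
                charVec (prefixSet σ (g k).val) := by rw [h0]
          _ = ∑ j : Fin (n+1), ∑ k ∈ s.filter (fun k => g k = j),
                charVec (prefixSet σ (g k).val) :=
              (Finset.sum_fiberwise_eq_sum_filter s Finset.univ g _).symm
          _ = ∑ j : Fin (n+1), ((s.filter (fun k => g k = j)).card)
                • charVec (prefixSet σ j.val) := by
              apply Finset.sum_congr rfl
              intro j _
              rw [Finset.sum_congr rfl
                (fun k hk => by rw [(Finset.mem_filter.mp hk).2]), Finset.sum_const]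
      have hLHS : (∑ b, charVec (S b))
          = ∑ j : Fin (n+1), (c j) • charVec (prefixSet σ j.val) := by
        rw [hS]
        rw [key f Finset.univ]
        apply Finset.sum_congr rfl
        intro j _
        rw [hcount j]
      have hRHS : a = ∑ j : Fin (n+1), (c j) • charVec (prefixSet σ j.val) := by
        rw [hadef]
        have h1 : ∀ k ∈ Finset.Icc 1 m, charVec (U k) = charVec (prefixSet σ (ρ k).val) := by
          intro k _
          rw [hUP k]
        rw [Finset.sum_congr rfl h1, key ρ (Finset.Icc 1 m)]
      rw [hLHS, hRHS]
end

section
/- Let n ≥ 1, r ≥ 1, and let a ∈ {0,r}^d satisfy: a_i − a_{ij} ≥ 0 for all distinct i, j ∈ [n], and a_i + a_{jk} − a_{ij} − a_{ik} ≥ 0 for all pairwise distinct i, j, k ∈ [n]. Then there exist an integer s with 0 ≤ s ≤ n and pairwise disjoint nonempty subsets S_1,…,S_s ⊆ [n] such that a = r·∑_{t=1}^s a_{S_t}; that is, a is r times the sum of the characteristic vectors of pairwise disjoint complete graphs. -/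
/-- **Lemma 4.1.** Let `a ∈ {0,r}^d` satisfy the Padberg inequalities (ii)
`a_i - a_{ij} ≥ 0` and (iv) `a_i + a_{jk} - a_{ij} - a_{ik} ≥ 0`. Then `a` is
`r` times the sum of characteristic vectors of at most `n` pairwise disjoint
nonempty complete graphs. -/
theorem stmt8 (n r : ℕ) (hn : 1 ≤ n) (hr : 1 ≤ r)
    (a : CoordKn n → ℝ) (haval : ∀ c, a c = 0 ∨ a c = (r : ℝ))
    (h2 : ∀ (i j : Fin n) (h : i ≠ j),
      0 ≤ a (Sum.inl i) - a (edgeCoord i j h))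
    (h4 : ∀ (i j k : Fin n) (hij : i ≠ j) (hik : i ≠ k) (hjk : j ≠ k),
      0 ≤ a (Sum.inl i) + a (edgeCoord j k hjk)
          - a (edgeCoord i j hij) - a (edgeCoord i k hik)) :
    ∃ (s : ℕ) (_ : s ≤ n) (Ssets : Fin s → Finset (Fin n)),
      (∀ t, (Ssets t).Nonempty) ∧
      (∀ t t' : Fin s, t ≠ t' → Disjoint (Ssets t) (Ssets t')) ∧
      a = (r : ℝ) • ∑ t, charVec (Ssets t) := by
  have hrpos : (0:ℝ) < r := by exact_mod_cast Nat.lt_of_lt_of_le Nat.zero_lt_one hr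
  -- symmetric "value" function on pairs (diagonal = vertex values)
  set v : Fin n → Fin n → ℝ := fun i j =>
    if h : i = j then a (Sum.inl i) else a (edgeCoord i j h) with hv
  have hedgeCoord : ∀ (i j : Fin n) (h : i ≠ j),
      edgeCoord i j h = edgeCoord j i h.symm := by
    intro i j h
    exact congrArg Sum.inr (Subtype.ext (Sym2.eq_swap))
  have hvedge : ∀ (i j : Fin n) (h : i ≠ j), v i j = a (edgeCoord i j h) := by
    intro i j h; simp [hv, h]
  have hvdiag : ∀ i : Fin n, v i i = a (Sum.inl i) := by intro i; simp [hv]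
  have hvsymm : ∀ i j, v i j = v j i := by
    intro i j
    by_cases h : i = j
    · subst h; rfl
    · rw [hvedge i j h, hvedge j i (Ne.symm h), hedgeCoord i j h]
  have hvmem : ∀ i j, v i j = 0 ∨ v i j = r := by
    intro i j
    by_cases h : i = j
    · subst h; rw [hvdiag i]; exact haval _
    · rw [hvedge i j h]; exact haval _
  have hvle : ∀ (i j : Fin n), i ≠ j → v i j ≤ v i i := by
    intro i j h
    have := h2 i j h
    rw [hvedge i j h, hvdiag i]; linarith
  have hvler : ∀ i j, v i j ≤ r := by
    intro i j
    rcases hvmem i j with h | h <;> rw [h] <;> linarith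
  have hdiagr : ∀ (i j : Fin n), i ≠ j → v i j = r → v i i = r := by
    intro i j h hij
    rcases hvmem i i with h0 | h0
    · exfalso; have := hvle i j h; rw [hij, h0] at this; linarith
    · exact h0
  have htrans : ∀ i j k : Fin n, v i j = r → v j k = r → v i k = r := by
    intro i j k hij hjk
    by_cases h1 : i = j
    · subst h1; exact hjk
    by_cases h2' : j = k
    · subst h2'; exact hij
    by_cases h3 : i = k
    · subst h3; exact hdiagr i j h1 hij
    · have h4' := h4 j i k (Ne.symm h1) h2' h3
      have e1 : a (edgeCoord j i (Ne.symm h1)) = r := by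
        rw [← hvedge j i (Ne.symm h1), ← hvsymm i j]; exact hij
      have e2 : a (edgeCoord j k h2') = r := by rw [← hvedge j k h2']; exact hjk
      have e3 : a (Sum.inl j) ≤ r := by rw [← hvdiag j]; exact hvler j j
      rw [hvedge i k h3]
      rw [e1, e2] at h4'
      have hge : (r:ℝ) ≤ a (edgeCoord i k h3) := by linarith
      rcases haval (edgeCoord i k h3) with h0 | h0
      · exfalso; rw [h0] at hge; linarith
      · exact h0
  -- the cliques (classes)
  set C : Fin n → Finset (Fin n) := fun i => Finset.univ.filter (fun j => v i j = r) with hC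
  have hmemC : ∀ i j, j ∈ C i ↔ v i j = r := by intro i j; simp [hC]
  have hCeq : ∀ i j, v i j = r → C i = C j := by
    intro i j hij
    ext k
    rw [hmemC, hmemC]
    constructor
    · intro hik; exact htrans j i k (by rw [← hvsymm i j]; exact hij) hik
    · intro hjk; exact htrans i j k hij hjk
  set T : Finset (Finset (Fin n)) :=
    (Finset.univ.filter (fun i => v i i = r)).image C with hT
  have hmemT : ∀ S, S ∈ T ↔ ∃ i, v i i = r ∧ C i = S := by
    intro S; simp [hT]
  have hTne : ∀ S ∈ T, S.Nonempty := by
    intro S hS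
    obtain ⟨i, hi, rfl⟩ := (hmemT S).mp hS
    exact ⟨i, (hmemC i i).mpr hi⟩
  have hTdisj : ∀ S1 ∈ T, ∀ S2 ∈ T, S1 ≠ S2 → Disjoint S1 S2 := by
    intro S1 hS1 S2 hS2 hne
    obtain ⟨i, hi, rfl⟩ := (hmemT S1).mp hS1
    obtain ⟨j, hj, rfl⟩ := (hmemT S2).mp hS2
    rw [Finset.disjoint_left]
    intro k hk1 hk2
    rw [hmemC] at hk1 hk2
    exact hne (hCeq i j (htrans i k j hk1 (by rw [← hvsymm j k]; exact hk2)))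
  have hscard : T.card ≤ n := by
    calc T.card = ∑ S ∈ T, 1 := by simp
    _ ≤ ∑ S ∈ T, S.card := Finset.sum_le_sum (fun S hS => Finset.card_pos.mpr (hTne S hS))
    _ = (T.biUnion id).card := (Finset.card_biUnion hTdisj).symm
    _ ≤ (Finset.univ : Finset (Fin n)).card := Finset.card_le_card (Finset.subset_univ _)
    _ = n := by simp
  -- the pointwise identity
  have hmain : ∀ c, a c = (r:ℝ) * ∑ S ∈ T, charVec S c := by
    rintro (i | ⟨e, he⟩)
    · have hsum : ∑ S ∈ T, charVec S (Sum.inl i)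
          = ((T.filter (fun S => i ∈ S)).card : ℝ) := by
        rw [← Finset.sum_boole]
        apply Finset.sum_congr rfl
        intro S _; simp [charVec]
      rw [hsum, ← hvdiag i]
      by_cases hiv : v i i = r
      · have hfil : T.filter (fun S => i ∈ S) = {C i} := by
          ext S
          simp only [Finset.mem_filter, Finset.mem_singleton]
          constructor
          · rintro ⟨hST, hiS⟩
            obtain ⟨j, hj, rfl⟩ := (hmemT S).mp hST
            exact (hCeq j i ((hmemC j i).mp hiS)).symm ▸ rfl
          · rintro rfl
            exact ⟨(hmemT (C i)).mpr ⟨i, hiv, rfl⟩, (hmemC i i).mpr hiv⟩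
        rw [hfil, hiv]; simp
      · have hv0 : v i i = 0 := (hvmem i i).resolve_right hiv
        have hfil : T.filter (fun S => i ∈ S) = ∅ := by
          ext S
          simp only [Finset.mem_filter, Finset.notMem_empty, iff_false, not_and]
          intro hST hiS
          obtain ⟨j, hj, rfl⟩ := (hmemT S).mp hST
          have hji : v j i = r := (hmemC j i).mp hiS
          by_cases hji' : j = i
          · subst hji'; exact hiv hji
          · exact hiv (hdiagr i j (Ne.symm hji') (by rw [hvsymm i j]; exact hji))
        rw [hfil, hv0]; simp
    · revert he
      induction e using Sym2.ind with
      | _ i j =>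
        intro he
        have hij : i ≠ j := fun h => he (by rw [h]; exact Sym2.mk_isDiag_iff.mpr rfl)
        have haeq : a (Sum.inr ⟨s(i, j), he⟩) = v i j := by
          rw [hvedge i j hij]; rfl
        have hsum : ∑ S ∈ T, charVec S (Sum.inr ⟨s(i, j), he⟩)
            = ((T.filter (fun S => i ∈ S ∧ j ∈ S)).card : ℝ) := by
          rw [← Finset.sum_boole]
          apply Finset.sum_congr rfl
          intro S _; simp [charVec]
        rw [hsum, haeq]
        by_cases hvij : v i j = r
        · have hii : v i i = r := hdiagr i j hij hvij
          have hfil : T.filter (fun S => i ∈ S ∧ j ∈ S) = {C i} := by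
            ext S
            simp only [Finset.mem_filter, Finset.mem_singleton]
            constructor
            · rintro ⟨hST, hiS, _⟩
              obtain ⟨k, hk, rfl⟩ := (hmemT S).mp hST
              exact (hCeq k i ((hmemC k i).mp hiS)).symm ▸ rfl
            · rintro rfl
              exact ⟨(hmemT (C i)).mpr ⟨i, hii, rfl⟩,
                (hmemC i i).mpr hii, (hmemC i j).mpr hvij⟩
          rw [hfil, hvij]; simp
        · have hv0 : v i j = 0 := (hvmem i j).resolve_right hvij
          have hfil : T.filter (fun S => i ∈ S ∧ j ∈ S) = ∅ := by
            ext S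
            simp only [Finset.mem_filter, Finset.notMem_empty, iff_false, not_and]
            intro hST hiS hjS
            obtain ⟨k, hk, rfl⟩ := (hmemT S).mp hST
            have h1 : v k i = r := (hmemC k i).mp hiS
            have h2 : v k j = r := (hmemC k j).mp hjS
            exact hvij (htrans i k j (by rw [hvsymm i k]; exact h1) h2)
          rw [hfil, hv0]; simp
  -- assemble
  refine ⟨T.card, hscard, fun t => ((T.equivFin.symm t : T) : Finset (Fin n)), ?_, ?_, ?_⟩
  · intro t; exact hTne _ (T.equivFin.symm t).2
  · intro t t' htt'
    refine hTdisj _ (T.equivFin.symm t).2 _ (T.equivFin.symm t').2 ?_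
    intro heq
    exact htt' (T.equivFin.symm.injective (Subtype.ext heq))
  · have hsum : ∑ t, charVec ((T.equivFin.symm t : T) : Finset (Fin n))
        = ∑ S ∈ T, charVec S := by
      rw [← Finset.sum_attach T (fun S => charVec S)]
      exact Equiv.sum_comp T.equivFin.symm (fun S : T => charVec (S : Finset (Fin n)))
    rw [hsum]
    funext c
    rw [Pi.smul_apply, Finset.sum_apply, smul_eq_mul]
    exact hmain c
end

section
/- Let n ≥ 1, m ≥ 1, and a* ∈ {0,1,…,m}^n. Define a ∈ ℤ^d by a_i = a*_i for i ∈ [n] and a_{ij} = min(a*_i, a*_j) for all 2-element subsets {i,j} of [n]. Then a ∈ m·P(K_n), and for all faces F^1,…,F^m of P(K_n) such that a lies in the Minkowski sum F^1 + ⋯ + F^m, there exist subsets S^1,…,S^m ⊆ [n] with a_{S^b} ∈ F^b for every b ∈ [m] and a = ∑_{b=1}^m a_{S^b}. -/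
lemma charVec_edge {n : ℕ} (S : Finset (Fin n)) {i j : Fin n} (h : i ≠ j) :
    charVec S (edgeCoord i j h) = if i ∈ S ∧ j ∈ S then 1 else 0 := by
  simp [charVec, edgeCoord]

lemma charVec_injective {n : ℕ} : Function.Injective (charVec (n := n)) := by
  intro S T h
  ext i
  have := congrFun h (Sum.inl i)
  simp only [charVec_inl] at this
  by_contra hc
  rcases em (i ∈ S) with hS | hS <;> rcases em (i ∈ T) with hT | hT <;>
    simp [hS, hT] at this hc ⊢

lemma dotP_sum_smul {n : ℕ} (c : CoordKn n → ℝ) {ι : Type*} (t : Finset ι)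
    (u : ι → ℝ) (v : ι → CoordKn n → ℝ) :
    dotP c (∑ i ∈ t, u i • v i) = ∑ i ∈ t, u i * dotP c (v i) := by
  simp only [dotP, Finset.sum_apply, Pi.smul_apply, smul_eq_mul, Finset.mul_sum]
  rw [Finset.sum_comm]
  exact Finset.sum_congr rfl fun i _ => Finset.sum_congr rfl fun cc _ => by ring

lemma mem_corr_iff {n : ℕ} (x : CoordKn n → ℝ) :
    x ∈ corrPolytope n ↔ ∃ w : Finset (Fin n) → ℝ,
      (∀ S, 0 ≤ w S) ∧ (∑ S, w S) = 1 ∧ (∑ S, w S • charVec S) = x := by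
  constructor
  · intro hx
    have himg : Set.range (charVec (n := n)) =
        ↑((Finset.univ : Finset (Finset (Fin n))).image charVec) := by
      simp [Finset.coe_image]
    rw [corrPolytope, himg, Finset.convexHull_eq] at hx
    obtain ⟨w, hw0, hw1, hwx⟩ := hx
    refine ⟨fun S => w (charVec S),
      fun S => hw0 _ (Finset.mem_image_of_mem _ (Finset.mem_univ S)), ?_, ?_⟩
    · rw [← hw1, Finset.sum_image (fun a _ b _ h => charVec_injective h)]
    · rw [← hwx, Finset.centerMass_eq_of_sum_1 _ _ hw1,
        Finset.sum_image (fun a _ b _ h => charVec_injective h)]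
      rfl
  · rintro ⟨w, hw0, hw1, hwx⟩
    exact mem_convexHull_of_exists_fintype w charVec hw0 hw1 (fun S => Set.mem_range_self S) hwx

lemma card_filter_Ico {m lo hi : ℕ} (hhi : hi ≤ m) :
    (Finset.univ.filter fun s : Fin m => lo ≤ (s : ℕ) ∧ (s : ℕ) < hi).card = hi - lo := by
  rcases le_or_gt lo hi with hlh | hlh
  · rw [← Nat.card_Ico lo hi]
    refine Finset.card_bij (fun (s : Fin m) _ => (s : ℕ)) ?_ ?_ ?_
    · intro s hs
      simp only [Finset.mem_filter] at hs
      exact Finset.mem_Ico.mpr hs.2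
    · intro s _ t _ h
      exact Fin.val_injective h
    · intro j hj
      rw [Finset.mem_Ico] at hj
      exact ⟨⟨j, lt_of_lt_of_le hj.2 hhi⟩, by simp [hj.1, hj.2], rfl⟩
  · rw [Nat.sub_eq_zero_of_le hlh.le]
    rw [Finset.card_eq_zero, Finset.filter_eq_empty_iff]
    intro s _
    omega

/-- **Proposition 4.4.** Let `a* ∈ {0,1,…,m}^n` and define `a ∈ ℤ^d` by
`a_i = a*_i` and `a_{ij} = min(a*_i, a*_j)`. Then `a ∈ m·P(K_n)`, and for all
faces `F^1, …, F^m` of `P(K_n)` whose Minkowski sum contains `a`, there exist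
sets `S^1, …, S^m ⊆ [n]` with `a_{S^b} ∈ F^b` for every `b` and
`a = ∑_b a_{S^b}`. -/
theorem stmt11 (n m : ℕ) (hn : 1 ≤ n) (hm : 1 ≤ m)
    (astar : Fin n → ℕ) (ha : ∀ i, astar i ≤ m)
    (a : CoordKn n → ℝ)
    (hav : ∀ i, a (Sum.inl i) = (astar i : ℝ))
    (hae : ∀ (i j : Fin n) (h : i ≠ j),
      a (edgeCoord i j h) = ((min (astar i) (astar j) : ℕ) : ℝ)) :
    a ∈ dilate m (corrPolytope n) ∧
    ∀ F : Fin m → Set (CoordKn n → ℝ), (∀ b, IsFaceOf (F b)) →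
      (∃ x : Fin m → (CoordKn n → ℝ), (∀ b, x b ∈ F b) ∧ (∑ b, x b) = a) →
      ∃ S : Fin m → Finset (Fin n),
        (∀ b, charVec (S b) ∈ F b) ∧ (∑ b, charVec (S b)) = a := by
  classical
  set L : ℕ → Finset (Fin n) := fun t => Finset.univ.filter (fun i => t ≤ astar i) with hL
  have hmemL : ∀ t i, i ∈ L t ↔ t ≤ astar i := by intro t i; simp [hL]
  have key_count : ∀ (f : Fin m → Fin m), Function.Bijective f → ∀ k, k ≤ m →
      ∑ b : Fin m, (if (f b : ℕ) + 1 ≤ k then (1 : ℝ) else 0) = k := by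
    intro f hf k hk
    rw [Fintype.sum_bijective f hf _
      (fun s : Fin m => if (s : ℕ) + 1 ≤ k then (1 : ℝ) else 0) (fun b => rfl)]
    rw [Finset.sum_boole]
    have : (Finset.univ.filter fun s : Fin m => (s : ℕ) + 1 ≤ k)
        = (Finset.univ.filter fun s : Fin m => 0 ≤ (s : ℕ) ∧ (s : ℕ) < k) := by
      apply Finset.filter_congr
      intro s _
      constructor <;> omega
    rw [this, card_filter_Ico hk]
    simp
  have sum_charVec : ∀ (f : Fin m → Fin m), Function.Bijective f →
      (∑ b, charVec (L ((f b : ℕ) + 1))) = a := by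
    intro f hf
    funext cc
    rw [Finset.sum_apply]
    rcases cc with i | e
    · rw [hav i]
      have he : ∀ b : Fin m, charVec (L ((f b : ℕ) + 1)) (Sum.inl i)
          = if (f b : ℕ) + 1 ≤ astar i then (1 : ℝ) else 0 := by
        intro b
        rw [charVec_inl]
        simp [hmemL]
      rw [Finset.sum_congr rfl (fun b _ => he b)]
      exact key_count f hf (astar i) (ha i)
    · obtain ⟨e, hd⟩ := e
      revert hd
      induction e using Sym2.ind with
      | _ i j =>
        intro hd
        have hij : i ≠ j := fun h => hd (by simp [h])
        have hco : (Sum.inr ⟨s(i, j), hd⟩ : CoordKn n) = edgeCoord i j hij := rfl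
        rw [hco, hae i j hij]
        have he : ∀ b : Fin m, charVec (L ((f b : ℕ) + 1)) (edgeCoord i j hij)
            = if (f b : ℕ) + 1 ≤ min (astar i) (astar j) then (1 : ℝ) else 0 := by
          intro b
          rw [charVec_edge _ hij]
          simp only [hmemL]
          congr 1
          simp only [eq_iff_iff]
          omega
        rw [Finset.sum_congr rfl (fun b _ => he b)]
        exact key_count f hf _ (le_trans (min_le_left _ _) (ha i))
  have hm0 : (m : ℝ) ≠ 0 := by positivity
  constructor
  · refine ⟨(m : ℝ)⁻¹ • ∑ b : Fin m, charVec (L ((b : ℕ) + 1)), ?_, ?_⟩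
    · apply mem_convexHull_of_exists_fintype (fun _ : Fin m => (m : ℝ)⁻¹)
        (fun b : Fin m => charVec (L ((b : ℕ) + 1)))
      · intro b; positivity
      · rw [Finset.sum_const, Finset.card_univ, Fintype.card_fin, nsmul_eq_mul,
          mul_inv_cancel₀ hm0]
      · intro b; exact Set.mem_range_self _
      · rw [← Finset.smul_sum]
    · rw [smul_smul, mul_inv_cancel₀ hm0, one_smul]
      have := sum_charVec id Function.bijective_id
      simpa using this.symm
  · intro F hF hx
    obtain ⟨x, hxF, hxa⟩ := hx
    choose c hc using hF
    have hxP : ∀ b, x b ∈ corrPolytope n := by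
      intro b; have := hxF b; rw [hc b] at this; exact this.1
    have hxmax : ∀ b, ∀ y ∈ corrPolytope n, dotP (c b) y ≤ dotP (c b) (x b) := by
      intro b; have := hxF b; rw [hc b] at this; exact this.2
    choose w hw0 hw1 hwx using fun b => (mem_corr_iff (x b)).mp (hxP b)
    have hsum_coord : ∀ cc, ∑ b, x b cc = a cc := by
      intro cc; rw [← hxa, Finset.sum_apply]
    have hxv : ∀ b i, x b (Sum.inl i)
        = ∑ S, w b S * (if i ∈ S then (1 : ℝ) else 0) := by
      intro b i
      rw [← hwx b, Finset.sum_apply]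
      exact Finset.sum_congr rfl fun S _ => by rw [Pi.smul_apply, smul_eq_mul, charVec_inl]
    have hxe : ∀ b (i j : Fin n) (h : i ≠ j), x b (edgeCoord i j h)
        = ∑ S, w b S * (if i ∈ S ∧ j ∈ S then (1 : ℝ) else 0) := by
      intro b i j h
      rw [← hwx b, Finset.sum_apply]
      exact Finset.sum_congr rfl fun S _ => by rw [Pi.smul_apply, smul_eq_mul, charVec_edge _ h]
    have hav2 : ∀ i, ∑ b, x b (Sum.inl i) = (astar i : ℝ) := by
      intro i; rw [hsum_coord, hav]
    have hae2 : ∀ (i j : Fin n) (h : i ≠ j),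
        ∑ b, x b (edgeCoord i j h) = ((min (astar i) (astar j) : ℕ) : ℝ) := by
      intro i j h; rw [hsum_coord, hae]
    have hup : ∀ b S, w b S ≠ 0 → ∀ i j : Fin n, astar i ≤ astar j → i ∈ S → j ∈ S := by
      intro b S hS i j hle hiS
      by_cases hij : i = j
      · exact hij ▸ hiS
      have h2 : ∀ b' : Fin m, x b' (Sum.inl i) - x b' (edgeCoord i j hij)
          = ∑ S', w b' S' *
            ((if i ∈ S' then (1 : ℝ) else 0) - (if i ∈ S' ∧ j ∈ S' then 1 else 0)) := by
        intro b'
        rw [hxv, hxe, ← Finset.sum_sub_distrib]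
        exact Finset.sum_congr rfl fun S' _ => by ring
      have hnn : ∀ S' : Finset (Fin n), ∀ b' : Fin m, 0 ≤ w b' S' *
          ((if i ∈ S' then (1 : ℝ) else 0) - (if i ∈ S' ∧ j ∈ S' then 1 else 0)) := by
        intro S' b'
        apply mul_nonneg (hw0 b' S')
        by_cases h1 : i ∈ S' <;> by_cases h2 : j ∈ S' <;> simp [h1, h2]
      have h1 : ∑ b' : Fin m, (x b' (Sum.inl i) - x b' (edgeCoord i j hij)) = 0 := by
        rw [Finset.sum_sub_distrib, hav2 i, hae2 i j hij, min_eq_left hle, sub_self]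
      have h4 : ∀ b' ∈ Finset.univ, (x b' (Sum.inl i) - x b' (edgeCoord i j hij)) = 0 :=
        (Finset.sum_eq_zero_iff_of_nonneg (fun b' _ => by
          rw [h2 b']; exact Finset.sum_nonneg fun S' _ => hnn S' b')).mp h1
      have h5 := (h2 b).symm.trans (h4 b (Finset.mem_univ b))
      have h6 := (Finset.sum_eq_zero_iff_of_nonneg
        (fun S' _ => hnn S' b)).mp h5 S (Finset.mem_univ S)
      by_contra hjS
      rw [if_pos hiS, if_neg (fun hh : i ∈ S ∧ j ∈ S => hjS hh.2)] at h6
      simp at h6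
      exact hS h6
    have hzero : ∀ b S, w b S ≠ 0 → ∀ i, astar i = 0 → i ∉ S := by
      intro b S hS i h0 hiS
      have hs0 : ∑ b' : Fin m, x b' (Sum.inl i) = 0 := by rw [hav2 i, h0]; simp
      have hnn : ∀ S' : Finset (Fin n), ∀ b' : Fin m,
          0 ≤ w b' S' * (if i ∈ S' then (1 : ℝ) else 0) := fun S' b' =>
        mul_nonneg (hw0 b' S') (by split <;> norm_num)
      have h4 := (Finset.sum_eq_zero_iff_of_nonneg (fun b' _ => by
          rw [hxv]; exact Finset.sum_nonneg fun S' _ => hnn S' b')).mp hs0 b (Finset.mem_univ b)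
      rw [hxv] at h4
      have h6 := (Finset.sum_eq_zero_iff_of_nonneg
        (fun S' _ => hnn S' b)).mp h4 S (Finset.mem_univ S)
      rw [if_pos hiS, mul_one] at h6
      exact hS h6
    have hfull : ∀ b S, w b S ≠ 0 → ∀ i, astar i = m → i ∈ S := by
      intro b S hS i hi
      have hle1 : ∀ b' : Fin m, x b' (Sum.inl i) ≤ 1 := by
        intro b'
        rw [hxv]
        calc ∑ S', w b' S' * (if i ∈ S' then (1 : ℝ) else 0)
            ≤ ∑ S', w b' S' := Finset.sum_le_sum fun S' _ => by
              by_cases h : i ∈ S' <;> simp [h, hw0 b' S']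
          _ = 1 := hw1 b'
      have hs : ∑ b' : Fin m, ((1 : ℝ) - x b' (Sum.inl i)) = 0 := by
        rw [Finset.sum_sub_distrib, hav2 i, hi, Finset.sum_const, Finset.card_univ,
          Fintype.card_fin, nsmul_eq_mul, mul_one, sub_self]
      have h4 := (Finset.sum_eq_zero_iff_of_nonneg (fun b' _ => by
          have := hle1 b'; linarith)).mp hs b (Finset.mem_univ b)
      have h5 : x b (Sum.inl i) = 1 := by linarith
      rw [hxv b i] at h5
      have h6 : ∑ S', w b S' * ((1 : ℝ) - (if i ∈ S' then 1 else 0)) = 0 := by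
        simp only [mul_sub, mul_one]
        rw [Finset.sum_sub_distrib, hw1 b, h5, sub_self]
      have h7 := (Finset.sum_eq_zero_iff_of_nonneg (fun S' _ => by
          apply mul_nonneg (hw0 b S')
          by_cases h : i ∈ S' <;> simp [h])).mp h6 S (Finset.mem_univ S)
      by_contra hiS
      rw [if_neg hiS] at h7
      simp at h7
      exact hS h7
    have hface : ∀ b S, w b S ≠ 0 → charVec S ∈ F b := by
      intro b S hS
      have hsp : ∀ T : Finset (Fin n), charVec T ∈ corrPolytope n := fun T =>
        subset_convexHull ℝ _ (Set.mem_range_self T)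
      have hdx : dotP (c b) (x b) = ∑ T, w b T * dotP (c b) (charVec T) := by
        rw [← hwx b, dotP_sum_smul]
      have hTle : ∀ T : Finset (Fin n), dotP (c b) (charVec T) ≤ dotP (c b) (x b) :=
        fun T => hxmax b _ (hsp T)
      have h0 : ∑ T, w b T * (dotP (c b) (x b) - dotP (c b) (charVec T)) = 0 := by
        simp only [mul_sub]
        rw [Finset.sum_sub_distrib, ← Finset.sum_mul, hw1 b, one_mul, ← hdx, sub_self]
      have h7 := (Finset.sum_eq_zero_iff_of_nonneg (fun T _ =>
          mul_nonneg (hw0 b T) (sub_nonneg.mpr (hTle T)))).mp h0 S (Finset.mem_univ S)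
      have h8 : dotP (c b) (charVec S) = dotP (c b) (x b) := by
        rcases mul_eq_zero.mp h7 with h | h
        · exact absurd h hS
        · linarith
      rw [hc b]
      exact ⟨hsp S, fun y hy => le_trans (hxmax b y hy) h8.ge⟩
    have hclass : ∀ b S, w b S ≠ 0 → ∃ s : Fin m, S = L ((s : ℕ) + 1) := by
      intro b S hS
      rcases S.eq_empty_or_nonempty with rfl | hne
      · obtain ⟨i₁, -, hmax⟩ := Finset.exists_max_image Finset.univ astar
          ⟨⟨0, hn⟩, Finset.mem_univ _⟩
        have hlt : astar i₁ < m := by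
          rcases lt_or_eq_of_le (ha i₁) with h | h
          · exact h
          · exact absurd (hfull b ∅ hS i₁ h) (Finset.notMem_empty i₁)
        refine ⟨⟨astar i₁, hlt⟩, ?_⟩
        have hv : ((⟨astar i₁, hlt⟩ : Fin m) : ℕ) = astar i₁ := rfl
        ext j
        rw [hv, hmemL]
        simp only [Finset.notMem_empty, false_iff]
        have := hmax j (Finset.mem_univ j)
        omega
      · obtain ⟨i₀, hi₀S, hminS⟩ := Finset.exists_min_image S astar hne
        have h1 : 1 ≤ astar i₀ := by
          by_contra h
          push_neg at h
          exact hzero b S hS i₀ (by omega) hi₀S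
        have hlt : astar i₀ - 1 < m := by have := ha i₀; omega
        refine ⟨⟨astar i₀ - 1, hlt⟩, ?_⟩
        have hv : ((⟨astar i₀ - 1, hlt⟩ : Fin m) : ℕ) = astar i₀ - 1 := rfl
        ext j
        rw [hv, hmemL]
        constructor
        · intro hjS
          have := hminS j hjS
          omega
        · intro hj
          exact hup b S hS i₀ j (by omega) hi₀S
    have hW : ∀ S : Finset (Fin n), (∃ b₀, w b₀ S ≠ 0) →
        ∑ b, w b S
          = ((Finset.univ.filter fun s : Fin m => L ((s : ℕ) + 1) = S).card : ℝ) := by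
      rintro S ⟨b₀, hb₀⟩
      rcases S.eq_empty_or_nonempty with rfl | hne
      · obtain ⟨i₁, -, hmax⟩ := Finset.exists_max_image Finset.univ astar
          ⟨⟨0, hn⟩, Finset.mem_univ _⟩
        have hlt : astar i₁ < m := by
          rcases lt_or_eq_of_le (ha i₁) with h | h
          · exact h
          · exact absurd (hfull b₀ ∅ hb₀ i₁ h) (Finset.notMem_empty i₁)
        have hwb : ∀ b, w b ∅ = 1 - x b (Sum.inl i₁) := by
          intro b
          have key : ∀ T : Finset (Fin n), w b T * (if i₁ ∈ T then (1 : ℝ) else 0)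
              = w b T - (if T = ∅ then w b T else 0) := by
            intro T
            by_cases hT : w b T = 0
            · simp [hT]
            by_cases hTe : T = ∅
            · subst hTe; simp
            · obtain ⟨t, ht⟩ := Finset.nonempty_iff_ne_empty.mpr hTe
              have : i₁ ∈ T := hup b T hT t i₁ (hmax t (Finset.mem_univ t)) ht
              simp [hTe, this]
          rw [hxv, Finset.sum_congr rfl fun T _ => key T, Finset.sum_sub_distrib, hw1 b,
            Fintype.sum_ite_eq' ∅ (w b)]
          ring
        have hsum : ∑ b, w b ∅ = (m : ℝ) - astar i₁ := by
          rw [Finset.sum_congr rfl fun b _ => hwb b, Finset.sum_sub_distrib, hav2 i₁,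
            Finset.sum_const, Finset.card_univ, Fintype.card_fin, nsmul_eq_mul, mul_one]
        rw [hsum]
        have hfe : (Finset.univ.filter fun s : Fin m => L ((s : ℕ) + 1) = ∅)
            = Finset.univ.filter fun s : Fin m => astar i₁ ≤ (s : ℕ) ∧ (s : ℕ) < m := by
          apply Finset.filter_congr
          intro s _
          constructor
          · intro hLe
            refine ⟨?_, s.isLt⟩
            by_contra hcon
            push_neg at hcon
            have hmem : i₁ ∈ L ((s : ℕ) + 1) := (hmemL _ _).mpr (by omega)
            rw [hLe] at hmem
            exact Finset.notMem_empty _ hmem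
          · rintro ⟨h1, -⟩
            ext j
            rw [hmemL]
            simp only [Finset.notMem_empty, iff_false]
            have := hmax j (Finset.mem_univ j)
            omega
        rw [hfe, card_filter_Ico le_rfl, Nat.cast_sub hlt.le]
      · obtain ⟨i₀, hi₀S, hminS⟩ := Finset.exists_min_image S astar hne
        by_cases hSuniv : S = Finset.univ
        · subst hSuniv
          have hwb : ∀ b, w b Finset.univ = x b (Sum.inl i₀) := by
            intro b
            have key : ∀ T : Finset (Fin n), w b T * (if i₀ ∈ T then (1 : ℝ) else 0)
                = (if T = Finset.univ then w b T else 0) := by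
              intro T
              by_cases hT : w b T = 0
              · simp [hT]
              by_cases hTu : T = Finset.univ
              · subst hTu; simp
              · have hni : i₀ ∉ T := by
                  intro hi₀T
                  apply hTu
                  ext j
                  simp only [Finset.mem_univ, iff_true]
                  exact hup b T hT i₀ j (hminS j (Finset.mem_univ j)) hi₀T
                simp [hTu, hni]
            rw [hxv, Finset.sum_congr rfl fun T _ => key T,
              Fintype.sum_ite_eq' Finset.univ (w b)]
          have hsum : ∑ b, w b Finset.univ = (astar i₀ : ℝ) := by
            rw [Finset.sum_congr rfl fun b _ => hwb b, hav2 i₀]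
          rw [hsum]
          have hfe : (Finset.univ.filter fun s : Fin m => L ((s : ℕ) + 1) = Finset.univ)
              = Finset.univ.filter fun s : Fin m => 0 ≤ (s : ℕ) ∧ (s : ℕ) < astar i₀ := by
            apply Finset.filter_congr
            intro s _
            constructor
            · intro hLe
              have hmem : i₀ ∈ L ((s : ℕ) + 1) := by rw [hLe]; exact Finset.mem_univ i₀
              rw [hmemL] at hmem
              exact ⟨Nat.zero_le _, by omega⟩
            · rintro ⟨-, h2⟩
              ext j
              rw [hmemL]
              simp only [Finset.mem_univ, iff_true]
              have := hminS j (Finset.mem_univ j)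
              omega
          rw [hfe, card_filter_Ico (ha i₀)]
          simp
        · have hcne : Sᶜ.Nonempty := by
            by_contra hcon
            rw [Finset.not_nonempty_iff_eq_empty, Finset.compl_eq_empty_iff] at hcon
            exact hSuniv hcon
          obtain ⟨j₀, hj₀c, hmaxc⟩ := Finset.exists_max_image Sᶜ astar hcne
          have hj₀S : j₀ ∉ S := Finset.mem_compl.mp hj₀c
          have hij : i₀ ≠ j₀ := fun h => hj₀S (h ▸ hi₀S)
          have hlohi : astar j₀ < astar i₀ := by
            by_contra h
            push_neg at h
            exact hj₀S (hup b₀ S hb₀ i₀ j₀ h hi₀S)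
          have hwb : ∀ b, w b S = x b (Sum.inl i₀) - x b (edgeCoord i₀ j₀ hij) := by
            intro b
            rw [hxv, hxe, ← Finset.sum_sub_distrib]
            have key : ∀ T : Finset (Fin n),
                w b T * (if i₀ ∈ T then (1 : ℝ) else 0)
                  - w b T * (if i₀ ∈ T ∧ j₀ ∈ T then (1 : ℝ) else 0)
                = (if T = S then w b T else 0) := by
              intro T
              by_cases hT : w b T = 0
              · simp [hT]
              by_cases hTS : T = S
              · subst hTS; simp [hi₀S, hj₀S]
              · have himp : i₀ ∈ T → j₀ ∈ T := by
                  intro hi₀T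
                  by_contra hj₀T
                  apply hTS
                  ext j
                  constructor
                  · intro hjT
                    by_contra hjS
                    exact hj₀T (hup b T hT j j₀ (hmaxc j (Finset.mem_compl.mpr hjS)) hjT)
                  · intro hjS
                    exact hup b T hT i₀ j (hminS j hjS) hi₀T
                by_cases hi₀T : i₀ ∈ T
                · simp [hi₀T, himp hi₀T, hTS]
                · simp [hi₀T, hTS]
            rw [Finset.sum_congr rfl fun T _ => key T, Fintype.sum_ite_eq' S (w b)]
          have hsum : ∑ b, w b S = (astar i₀ : ℝ) - astar j₀ := by
            rw [Finset.sum_congr rfl fun b _ => hwb b, Finset.sum_sub_distrib, hav2 i₀,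
              hae2 i₀ j₀ hij, min_eq_right hlohi.le]
          rw [hsum]
          have hfe : (Finset.univ.filter fun s : Fin m => L ((s : ℕ) + 1) = S)
              = Finset.univ.filter fun s : Fin m =>
                  astar j₀ ≤ (s : ℕ) ∧ (s : ℕ) < astar i₀ := by
            apply Finset.filter_congr
            intro s _
            constructor
            · intro hLe
              have h1 : i₀ ∈ L ((s : ℕ) + 1) := by rw [hLe]; exact hi₀S
              have h2 : j₀ ∉ L ((s : ℕ) + 1) := by rw [hLe]; exact hj₀S
              rw [hmemL] at h1
              rw [hmemL] at h2
              omega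
            · rintro ⟨h1, h2⟩
              ext j
              rw [hmemL]
              constructor
              · intro hj
                by_contra hjS
                have := hmaxc j (Finset.mem_compl.mpr hjS)
                omega
              · intro hjS
                have := hminS j hjS
                omega
          rw [hfe, card_filter_Ico (ha i₀), Nat.cast_sub hlohi.le]
    set slots : Fin m → Finset (Fin m) :=
      fun b => Finset.univ.filter (fun s => charVec (L ((s : ℕ) + 1)) ∈ F b) with hslots
    have hall : ∀ B : Finset (Fin m), B.card ≤ (B.biUnion slots).card := by
      intro B
      set 𝒞 : Finset (Finset (Fin n)) :=
        (Finset.univ : Finset (Fin m)).image (fun s : Fin m => L ((s : ℕ) + 1)) with h𝒞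
      have hsupp𝒞 : ∀ b S, w b S ≠ 0 → S ∈ 𝒞 := by
        intro b S h
        obtain ⟨s, hs⟩ := hclass b S h
        exact Finset.mem_image.mpr ⟨s, Finset.mem_univ s, hs.symm⟩
      have hone : ∀ b, ∑ S ∈ 𝒞, w b S = 1 := by
        intro b
        rw [← hw1 b]
        apply Finset.sum_subset (Finset.subset_univ 𝒞)
        intro S _ hS
        by_contra h
        exact hS (hsupp𝒞 b S h)
      set 𝒞' := 𝒞.filter (fun S => ∃ b ∈ B, w b S ≠ 0) with h𝒞'
      set N : Finset (Fin n) → Finset (Fin m) :=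
        fun S => Finset.univ.filter fun s : Fin m => L ((s : ℕ) + 1) = S with hN
      have hBcard : (B.card : ℝ) = ∑ S ∈ 𝒞', ∑ b ∈ B, w b S := by
        calc (B.card : ℝ) = ∑ _b ∈ B, (1 : ℝ) := by simp
          _ = ∑ b ∈ B, ∑ S ∈ 𝒞, w b S := Finset.sum_congr rfl fun b _ => (hone b).symm
          _ = ∑ S ∈ 𝒞, ∑ b ∈ B, w b S := Finset.sum_comm
          _ = ∑ S ∈ 𝒞', ∑ b ∈ B, w b S := by
            symm
            apply Finset.sum_subset (Finset.filter_subset _ _)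
            intro S hS hS'
            apply Finset.sum_eq_zero
            intro b hb
            by_contra h
            exact hS' (Finset.mem_filter.mpr ⟨hS, b, hb, h⟩)
      have hbound : ∀ S ∈ 𝒞', (∑ b ∈ B, w b S) ≤ ((N S).card : ℝ) := by
        intro S hS
        rw [h𝒞', Finset.mem_filter] at hS
        obtain ⟨-, b₁, -, hb₁⟩ := hS
        calc ∑ b ∈ B, w b S ≤ ∑ b : Fin m, w b S :=
              Finset.sum_le_sum_of_subset_of_nonneg (Finset.subset_univ B)
                (fun b _ _ => hw0 b S)
          _ = ((N S).card : ℝ) := by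
              simp only [hN]
              exact hW S ⟨b₁, hb₁⟩
      have hdisj : ∀ S ∈ 𝒞', ∀ S' ∈ 𝒞', S ≠ S' → Disjoint (N S) (N S') := by
        intro S _ S' _ hSS'
        rw [Finset.disjoint_left]
        intro s hs hs'
        simp only [hN, Finset.mem_filter] at hs hs'
        exact hSS' (hs.2.symm.trans hs'.2)
      have hsub : 𝒞'.biUnion N ⊆ B.biUnion slots := by
        intro s hs
        rw [Finset.mem_biUnion] at hs
        obtain ⟨S, hS𝒞', hsS⟩ := hs
        rw [h𝒞', Finset.mem_filter] at hS𝒞'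
        obtain ⟨-, b₁, hb₁B, hb₁⟩ := hS𝒞'
        simp only [hN, Finset.mem_filter] at hsS
        refine Finset.mem_biUnion.mpr ⟨b₁, hb₁B, ?_⟩
        simp only [hslots, Finset.mem_filter]
        refine ⟨Finset.mem_univ s, ?_⟩
        rw [hsS.2]
        exact hface b₁ S hb₁
      have hchain : (B.card : ℝ) ≤ ((B.biUnion slots).card : ℝ) := by
        rw [hBcard]
        calc ∑ S ∈ 𝒞', ∑ b ∈ B, w b S ≤ ∑ S ∈ 𝒞', ((N S).card : ℝ) :=
              Finset.sum_le_sum hbound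
          _ = ((∑ S ∈ 𝒞', (N S).card : ℕ) : ℝ) := by rw [Nat.cast_sum]
          _ = (((𝒞'.biUnion N).card : ℕ) : ℝ) := by rw [Finset.card_biUnion hdisj]
          _ ≤ ((B.biUnion slots).card : ℝ) := by
              exact_mod_cast Finset.card_le_card hsub
      exact_mod_cast hchain
    obtain ⟨f, hfinj, hfmem⟩ :=
      (Finset.all_card_le_biUnion_card_iff_exists_injective slots).mp hall
    have hfbij : Function.Bijective f := Finite.injective_iff_bijective.mp hfinj
    refine ⟨fun b => L ((f b : ℕ) + 1), ?_, sum_charVec f hfbij⟩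
    intro b
    have := hfmem b
    rw [hslots, Finset.mem_filter] at this
    exact this.2
end

section
/- Let n ≥ 1, m ≥ 1, and a* ∈ {0,1,…,m}^n. Define a ∈ ℤ^d by a_i = a*_i for i ∈ [n] and a_{ij} = min(a*_i, a*_j) for all 2-element subsets {i,j} of [n], and for each b ∈ [m] set S^b = {i ∈ [n] : a*_i ≥ b}. Then S^m ⊆ S^{m−1} ⊆ ⋯ ⊆ S^1 (the sets are nested) and a = ∑_{b=1}^m a_{S^b}. In particular, a ∈ m·P(K_n) ∩ ℤ^d and π(a) = a*. -/
lemma sum_ind (m k : ℕ) (hk : k ≤ m) :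
    ∑ b : Fin m, (if (b : ℕ) + 1 ≤ k then (1 : ℝ) else 0) = k := by
  rw [Fin.sum_univ_eq_sum_range (fun b => if b + 1 ≤ k then (1 : ℝ) else 0)]
  rw [← Finset.sum_subset (Finset.range_subset_range.mpr hk)
    (by intro x hx hxk; simp [Finset.mem_range] at hx hxk ⊢; omega)]
  simp [Finset.sum_ite_of_true]
  rw [Finset.filter_true_of_mem (by intro i hi; simp [Finset.mem_range] at hi; omega)]; simp

/-- Let `a* ∈ {0,1,…,m}^n`, let `a ∈ ℤ^d` be given by `a_i = a*_i`,
`a_{ij} = min(a*_i, a*_j)`, and for `b ∈ [m]` let `S^b = {i : a*_i ≥ b}`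
(here `b ∈ Fin m` encodes the value `b + 1 ∈ {1, …, m}`). Then the `S^b` are
nested, `a = ∑_b a_{S^b}`, and in particular `a ∈ m·P(K_n) ∩ ℤ^d` with
`π(a) = a*`. -/
theorem stmt12 (n m : ℕ) (hn : 1 ≤ n) (hm : 1 ≤ m)
    (astar : Fin n → ℕ) (ha : ∀ i, astar i ≤ m)
    (a : CoordKn n → ℝ)
    (hav : ∀ i, a (Sum.inl i) = (astar i : ℝ))
    (hae : ∀ (i j : Fin n) (h : i ≠ j),
      a (edgeCoord i j h) = ((min (astar i) (astar j) : ℕ) : ℝ))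
    (S : Fin m → Finset (Fin n))
    (hS : ∀ (b : Fin m) (i : Fin n), i ∈ S b ↔ (b : ℕ) + 1 ≤ astar i) :
    (∀ b b' : Fin m, b ≤ b' → S b' ⊆ S b) ∧
    (∑ b, charVec (S b)) = a ∧
    a ∈ dilate m (corrPolytope n) ∧
    (∀ c, ∃ z : ℤ, a c = (z : ℝ)) ∧
    (∀ i, a (Sum.inl i) = (astar i : ℝ)) := by
  have hnested : ∀ b b' : Fin m, b ≤ b' → S b' ⊆ S b := by
    intro b b' hbb' i hi
    rw [hS] at hi ⊢
    have : (b : ℕ) ≤ (b' : ℕ) := hbb'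
    omega
  have hsum : (∑ b, charVec (S b)) = a := by
    funext c
    rw [Finset.sum_apply]
    match c with
    | Sum.inl i =>
        rw [hav]
        simp only [charVec, hS]
        exact sum_ind m (astar i) (ha i)
    | Sum.inr e =>
        obtain ⟨e, he⟩ := e
        induction e using Sym2.ind with
        | _ i j =>
          have hij : i ≠ j := fun h => he (by simp [h])
          have : Sum.inr (⟨s(i, j), he⟩ : EdgeKn n) = edgeCoord i j hij := by
            simp [edgeCoord]
          rw [this, hae i j hij]
          simp only [charVec, edgeCoord, Sym2.lift_mk, hS, le_min_iff.symm]
          have h1 : min (astar i) (astar j) ≤ m := le_trans (min_le_left _ _) (ha i)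
          rw [sum_ind m _ h1]
  have hmem : a ∈ dilate m (corrPolytope n) := by
    refine ⟨(m : ℝ)⁻¹ • a, ?_, ?_⟩
    · rw [← hsum, Finset.smul_sum]
      apply Convex.sum_mem (convex_convexHull ℝ _)
      · intro b _; positivity
      · rw [Finset.sum_const, Finset.card_univ, Fintype.card_fin, nsmul_eq_mul,
          mul_inv_cancel₀ (by positivity : (m : ℝ) ≠ 0)]
      · intro b _
        exact subset_convexHull ℝ _ ⟨S b, rfl⟩
    · rw [smul_smul, mul_inv_cancel₀ (by positivity : (m : ℝ) ≠ 0), one_smul]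
  refine ⟨hnested, hsum, hmem, ?_, hav⟩
  intro c
  match c with
  | Sum.inl i => exact ⟨astar i, hav i⟩
  | Sum.inr e =>
      obtain ⟨e, he⟩ := e
      induction e using Sym2.ind with
      | _ i j =>
        have hij : i ≠ j := fun h => he (by simp [h])
        have heq : Sum.inr (⟨s(i, j), he⟩ : EdgeKn n) = edgeCoord i j hij := by
          simp [edgeCoord]
        exact ⟨min (astar i) (astar j), by rw [heq, hae i j hij]; push_cast; rfl⟩
end

section
/- Let n ≥ 1, s ≥ 1, and let k_1,…,k_s ∈ [n] be pairwise distinct. Then every characteristic vector a_S (S ⊆ [n]) satisfies ∑_{i=1}^s (a_S)_{k_i} − ∑_{1 ≤ i < j ≤ s} (a_S)_{k_i k_j} ≤ 1, and consequently every point x ∈ m·P(K_n) satisfies ∑_{i=1}^s x_{k_i} − ∑_{1 ≤ i < j ≤ s} x_{k_i k_j} ≤ m. -/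
/-- **The clique inequalities (vi')/(vi).** For pairwise distinct
`k_1, …, k_s ∈ [n]`, every characteristic vector `a_S` satisfies
`∑_i (a_S)_{k_i} - ∑_{i<j} (a_S)_{k_i k_j} ≤ 1`, and consequently every
`x ∈ m·P(K_n)` satisfies `∑_i x_{k_i} - ∑_{i<j} x_{k_i k_j} ≤ m`. -/
theorem stmt15 (n s m : ℕ) (hn : 1 ≤ n) (hs : 1 ≤ s) (hm : 1 ≤ m)
    (k : Fin s → Fin n) (hk : Function.Injective k) :
    (∀ S : Finset (Fin n),
      (∑ i, charVec S (Sum.inl (k i))) -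
        (∑ i : Fin s, ∑ j : Fin s,
          if h : i < j then
            charVec S (edgeCoord (k i) (k j) fun he => (ne_of_lt h) (hk he))
          else 0) ≤ 1) ∧
    (∀ x ∈ dilate m (corrPolytope n),
      (∑ i, x (Sum.inl (k i))) -
        (∑ i : Fin s, ∑ j : Fin s,
          if h : i < j then
            x (edgeCoord (k i) (k j) fun he => (ne_of_lt h) (hk he))
          else 0) ≤ (m : ℝ)) := by

  classical
  -- abbreviation for the linear functional
  set L : (CoordKn n → ℝ) → ℝ := fun x =>
    (∑ i, x (Sum.inl (k i))) -
      (∑ i : Fin s, ∑ j : Fin s,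
        if h : i < j then
          x (edgeCoord (k i) (k j) fun he => (ne_of_lt h) (hk he))
        else 0) with hL
  have hlin : ∀ (a b : ℝ) (z w : CoordKn n → ℝ),
      L (a • z + b • w) = a * L z + b * L w := by
    intro a b z w
    have h1 : ∀ c : CoordKn n, (a • z + b • w) c = a * z c + b * w c := fun c => rfl
    simp only [hL, h1]
    have h2 : ∀ i j : Fin s,
        (if h : i < j then
            a * z (edgeCoord (k i) (k j) fun he => (ne_of_lt h) (hk he))
              + b * w (edgeCoord (k i) (k j) fun he => (ne_of_lt h) (hk he))
          else 0)
        = a * (if h : i < j then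
            z (edgeCoord (k i) (k j) fun he => (ne_of_lt h) (hk he)) else 0)
          + b * (if h : i < j then
            w (edgeCoord (k i) (k j) fun he => (ne_of_lt h) (hk he)) else 0) := by
      intro i j; split_ifs <;> ring
    simp only [h2, Finset.sum_add_distrib, ← Finset.mul_sum]
    ring
  have part1 : ∀ S : Finset (Fin n), L (charVec S) ≤ 1 := by
    intro S
    set ind : Fin s → ℝ := fun i => if k i ∈ S then 1 else 0 with hind
    have hv : ∀ i, charVec S (Sum.inl (k i)) = ind i := fun i => rfl
    have he : ∀ (i j : Fin n) (h : i ≠ j),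
        charVec S (edgeCoord i j h) = (if i ∈ S then (1:ℝ) else 0) * (if j ∈ S then (1:ℝ) else 0) := by
      intro i j h
      simp only [charVec, edgeCoord, Sym2.lift_mk]
      by_cases hp : i ∈ S <;> by_cases hq : j ∈ S <;> simp [hp, hq]
    set t : ℝ := ∑ i, ind i with ht
    set E : ℝ := ∑ i : Fin s, ∑ j : Fin s,
        if h : i < j then ind i * ind j else 0 with hE
    have hLS : L (charVec S) = t - E := by
      simp only [hL, hv, ht, hE]
      congr 1
      refine Finset.sum_congr rfl fun i _ => Finset.sum_congr rfl fun j _ => ?_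
      split_ifs with h
      · exact he _ _ _
      · rfl
    have hsq : t * t = 2 * E + t := by
      have expand : t * t = ∑ i : Fin s, ∑ j : Fin s, ind i * ind j := by
        rw [ht, Finset.sum_mul_sum]
      have hterm : ∀ i j : Fin s, ind i * ind j =
          (if h : i < j then ind i * ind j else 0)
          + (if h : j < i then ind i * ind j else 0)
          + (if i = j then ind i * ind j else 0) := by
        intro i j
        rcases lt_trichotomy i j with h | h | h
        · simp [h, not_lt_of_gt h, ne_of_lt h]
        · simp [h, lt_irrefl]
        · simp [h, not_lt_of_gt h, (ne_of_lt h).symm]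
      have hE2 : (∑ i : Fin s, ∑ j : Fin s, if h : j < i then ind i * ind j else 0) = E := by
        rw [hE, Finset.sum_comm]
        refine Finset.sum_congr rfl fun i _ => Finset.sum_congr rfl fun j _ => ?_
        split_ifs <;> ring
      have hdiag : (∑ i : Fin s, ∑ j : Fin s, if i = j then ind i * ind j else 0) = t := by
        rw [ht]
        refine Finset.sum_congr rfl fun i _ => ?_
        rw [Finset.sum_ite_eq Finset.univ i (fun j => ind i * ind j)]
        simp only [Finset.mem_univ, if_true, hind]
        split_ifs <;> norm_num
      simp only [expand]
      calc ∑ i : Fin s, ∑ j : Fin s, ind i * ind j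
          = ∑ i : Fin s, ∑ j : Fin s,
            ((if h : i < j then ind i * ind j else 0)
            + (if h : j < i then ind i * ind j else 0)
            + (if i = j then ind i * ind j else 0)) := by
            refine Finset.sum_congr rfl fun i _ => Finset.sum_congr rfl fun j _ => hterm i j
        _ = E + E + t := by
            simp only [Finset.sum_add_distrib]; rw [hE2, hdiag, hE]
        _ = 2 * E + t := by ring
    have htnat : t = ((Finset.univ.filter (fun i => k i ∈ S)).card : ℝ) := by
      rw [ht]; simp [hind, Finset.sum_boole]
    rw [hLS]
    set c := (Finset.univ.filter (fun i => k i ∈ S)).card with hc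
    rcases le_or_gt c 1 with hle | hgt
    · have : t ≤ 1 := by rw [htnat]; exact_mod_cast hle
      nlinarith [sq_nonneg t, hsq]
    · have h2 : (2 : ℝ) ≤ t := by rw [htnat]; exact_mod_cast hgt
      nlinarith [hsq]
  refine ⟨part1, ?_⟩
  rintro x ⟨y, hy, rfl⟩
  have hconv : Convex ℝ {z : CoordKn n → ℝ | L z ≤ 1} := by
    intro z hz w hw a b ha hb hab
    have := hlin a b z w
    simp only [Set.mem_setOf_eq] at hz hw ⊢
    rw [this]
    nlinarith
  have hsub : Set.range (charVec (n := n)) ⊆ {z : CoordKn n → ℝ | L z ≤ 1} := by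
    rintro _ ⟨S, rfl⟩; exact part1 S
  have hy1 : L y ≤ 1 := convexHull_min hsub hconv hy
  have hLm : L ((m : ℝ) • y) = (m : ℝ) * L y := by
    have := hlin (m : ℝ) 0 y 0
    simpa using this
  have : L ((m : ℝ) • y) ≤ (m : ℝ) := by
    rw [hLm]
    have hm0 : (0 : ℝ) ≤ (m : ℝ) := by positivity
    nlinarith
  simpa [hL] using this
end

section
/- Let n = 4, so d = 10. Let a ∈ ℤ^10 be the point with a_i = 2 for every vertex i ∈ [4] and a_{ij} = 1 for every 2-element subset {i,j} of [4]. Then a ∈ 4·P(K_4) (indeed a is the sum of the midpoints of the four segments [a_∅, a_{{4}}], [a_{{2,3}}, a_{{1,3}}], [a_{{2,3,4}}, a_{{1,3,4}}], [a_{{1,2}}, a_{{1,2,4}}]), but there do not exist subsets S^1, S^2, S^3, S^4 ⊆ [4] with a = ∑_{b=1}^4 a_{S^b}. In particular, the correlation polytope P(K_4) does not have the integer decomposition property. -/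
-- auxiliary arithmetic lemma
lemma aux3311 : ∀ k0 k1 k2 k3 : ℕ, k0 ≤ 4 → k1 ≤ 4 → k2 ≤ 4 → k3 ≤ 4 →
    k0 + k1 + k2 + k3 = 8 → k0*k0 + k1*k1 + k2*k2 + k3*k3 = 20 →
    (k0 = 3 ∧ k1 = 3) ∨ (k0 = 3 ∧ k2 = 3) ∨ (k0 = 3 ∧ k3 = 3) ∨
    (k1 = 3 ∧ k2 = 3) ∨ (k1 = 3 ∧ k3 = 3) ∨ (k2 = 3 ∧ k3 = 3) := by
  intro k0 k1 k2 k3 h0 h1 h2 h3 hs hq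
  interval_cases k0 <;> interval_cases k1 <;> interval_cases k2 <;> interval_cases k3 <;> omega

/-- **Failure of IDP for `P(K_4)`** (here `[4]` is encoded as `Fin 4 = {0,1,2,3}`).
The point `a` with `a_i = 2` and `a_{ij} = 1` is the sum of the midpoints of
the four edges `[a_∅, a_{{3}}]`, `[a_{{1,2}}, a_{{0,2}}]`,
`[a_{{1,2,3}}, a_{{0,2,3}}]`, `[a_{{0,1}}, a_{{0,1,3}}]` of `P(K_4)`, hence
lies in `4·P(K_4)`, but it is not a sum of four lattice points `a_{S^b}` of
`P(K_4)`. -/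
theorem stmt16 (a : CoordKn 4 → ℝ)
    (hav : ∀ i : Fin 4, a (Sum.inl i) = 2)
    (hae : ∀ e : EdgeKn 4, a (Sum.inr e) = 1) :
    a = (1 / 2 : ℝ) • (charVec (∅ : Finset (Fin 4)) + charVec {3})
      + (1 / 2 : ℝ) • (charVec ({1, 2} : Finset (Fin 4)) + charVec {0, 2})
      + (1 / 2 : ℝ) • (charVec ({1, 2, 3} : Finset (Fin 4)) + charVec {0, 2, 3})
      + (1 / 2 : ℝ) • (charVec ({0, 1} : Finset (Fin 4)) + charVec {0, 1, 3}) ∧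
    a ∈ dilate 4 (corrPolytope 4) ∧
    ¬ ∃ S : Fin 4 → Finset (Fin 4), (∑ b, charVec (S b)) = a := by
  have heq : a = (1 / 2 : ℝ) • (charVec (∅ : Finset (Fin 4)) + charVec {3})
      + (1 / 2 : ℝ) • (charVec ({1, 2} : Finset (Fin 4)) + charVec {0, 2})
      + (1 / 2 : ℝ) • (charVec ({1, 2, 3} : Finset (Fin 4)) + charVec {0, 2, 3})
      + (1 / 2 : ℝ) • (charVec ({0, 1} : Finset (Fin 4)) + charVec {0, 1, 3}) := by
    funext c
    rcases c with i | ⟨e, he⟩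
    · fin_cases i <;> simp [charVec, hav] <;> norm_num
    · induction e using Sym2.ind with
      | _ i j =>
        rw [hae ⟨s(i, j), he⟩]
        rw [Sym2.mk_isDiag_iff] at he
        fin_cases i <;> fin_cases j <;> simp_all [charVec] <;> norm_num
  refine ⟨heq, ?_, ?_⟩
  · -- membership in 4 • P(K_4)
    set T : Fin 8 → Finset (Fin 4) :=
      ![∅, {3}, {1,2}, {0,2}, {1,2,3}, {0,2,3}, {0,1}, {0,1,3}] with hT
    refine ⟨∑ i : Fin 8, (1/8 : ℝ) • charVec (T i), ?_, ?_⟩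
    · exact (convex_convexHull ℝ _).sum_mem (fun i _ => by norm_num)
        (by simp) (fun i _ => subset_convexHull ℝ _ (Set.mem_range_self _))
    · rw [heq]
      simp only [Fin.sum_univ_eight, hT,
        show (![∅, {3}, {1,2}, {0,2}, {1,2,3}, {0,2,3}, {0,1}, {0,1,3}] :
          Fin 8 → Finset (Fin 4)) 0 = ∅ from rfl,
        show (![∅, {3}, {1,2}, {0,2}, {1,2,3}, {0,2,3}, {0,1}, {0,1,3}] :
          Fin 8 → Finset (Fin 4)) 1 = {3} from rfl,
        show (![∅, {3}, {1,2}, {0,2}, {1,2,3}, {0,2,3}, {0,1}, {0,1,3}] :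
          Fin 8 → Finset (Fin 4)) 2 = {1,2} from rfl,
        show (![∅, {3}, {1,2}, {0,2}, {1,2,3}, {0,2,3}, {0,1}, {0,1,3}] :
          Fin 8 → Finset (Fin 4)) 3 = {0,2} from rfl,
        show (![∅, {3}, {1,2}, {0,2}, {1,2,3}, {0,2,3}, {0,1}, {0,1,3}] :
          Fin 8 → Finset (Fin 4)) 4 = {1,2,3} from rfl,
        show (![∅, {3}, {1,2}, {0,2}, {1,2,3}, {0,2,3}, {0,1}, {0,1,3}] :
          Fin 8 → Finset (Fin 4)) 5 = {0,2,3} from rfl,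
        show (![∅, {3}, {1,2}, {0,2}, {1,2,3}, {0,2,3}, {0,1}, {0,1,3}] :
          Fin 8 → Finset (Fin 4)) 6 = {0,1} from rfl,
        show (![∅, {3}, {1,2}, {0,2}, {1,2,3}, {0,2,3}, {0,1}, {0,1,3}] :
          Fin 8 → Finset (Fin 4)) 7 = {0,1,3} from rfl]
      module
  · rintro ⟨S, hS⟩
    have hV : ∀ i : Fin 4, (∑ b, if i ∈ S b then (1:ℕ) else 0) = 2 := by
      intro i
      have h := congrFun hS (Sum.inl i)
      rw [hav i, Finset.sum_apply] at h
      have h2 : ((∑ b, if i ∈ S b then (1:ℕ) else 0 : ℕ) : ℝ) = 2 := by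
        push_cast
        simpa [charVec] using h
      exact_mod_cast h2
    have hEc : ∀ i j : Fin 4, i ≠ j →
        (∑ b, if i ∈ S b ∧ j ∈ S b then (1:ℕ) else 0) = 1 := by
      intro i j hij
      have h := congrFun hS (edgeCoord i j hij)
      rw [show edgeCoord i j hij = Sum.inr ⟨s(i,j), fun hd => hij (Sym2.mk_isDiag_iff.mp hd)⟩ from rfl] at h
      rw [hae _, Finset.sum_apply] at h
      have h2 : ((∑ b, if i ∈ S b ∧ j ∈ S b then (1:ℕ) else 0 : ℕ) : ℝ) = 1 := by
        push_cast
        simpa [charVec] using h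
      exact_mod_cast h2
    have hcard : ∀ b, (∑ i : Fin 4, if i ∈ S b then (1:ℕ) else 0) = (S b).card := by
      intro b
      rw [Finset.sum_ite_mem, Finset.univ_inter, Finset.card_eq_sum_ones]
    have h8 : (∑ b, (S b).card) = 8 := by
      have : (∑ b, ∑ i : Fin 4, if i ∈ S b then (1:ℕ) else 0) = 8 := by
        rw [Finset.sum_comm]
        simp [hV]
      simpa [hcard] using this
    have hsq : ∀ b, (S b).card * (S b).card
        = ∑ i : Fin 4, ∑ j : Fin 4, (if i ∈ S b ∧ j ∈ S b then (1:ℕ) else 0) := by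
      intro b
      rw [← hcard b, Finset.sum_mul_sum]
      refine Finset.sum_congr rfl fun i _ => Finset.sum_congr rfl fun j _ => ?_
      by_cases hi : i ∈ S b <;> by_cases hj : j ∈ S b <;> simp [hi, hj]
    have h20 : (∑ b, (S b).card * (S b).card) = 20 := by
      calc (∑ b, (S b).card * (S b).card)
          = ∑ b, ∑ i : Fin 4, ∑ j : Fin 4, (if i ∈ S b ∧ j ∈ S b then (1:ℕ) else 0) := by
            simp [hsq]
        _ = ∑ i : Fin 4, ∑ j : Fin 4, ∑ b, (if i ∈ S b ∧ j ∈ S b then (1:ℕ) else 0) := by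
            rw [Finset.sum_comm]
            exact Finset.sum_congr rfl fun i _ => Finset.sum_comm
        _ = ∑ i : Fin 4, ∑ j : Fin 4, (if i = j then 2 else 1) := by
            refine Finset.sum_congr rfl fun i _ => Finset.sum_congr rfl fun j _ => ?_
            by_cases hij : i = j
            · subst hij
              simp [hV i]
            · rw [if_neg hij]
              exact hEc i j hij
        _ = 20 := by decide
    have key : ∃ b c : Fin 4, b ≠ c ∧ (S b).card = 3 ∧ (S c).card = 3 := by
      have hle : ∀ b, (S b).card ≤ 4 := fun b => by
        simpa using Finset.card_le_univ (S b)
      rw [Fin.sum_univ_four] at h8 h20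
      have := aux3311 (S 0).card (S 1).card (S 2).card (S 3).card
        (hle 0) (hle 1) (hle 2) (hle 3) h8 h20
      rcases this with ⟨h, h'⟩ | ⟨h, h'⟩ | ⟨h, h'⟩ | ⟨h, h'⟩ | ⟨h, h'⟩ | ⟨h, h'⟩
      · exact ⟨0, 1, by decide, h, h'⟩
      · exact ⟨0, 2, by decide, h, h'⟩
      · exact ⟨0, 3, by decide, h, h'⟩
      · exact ⟨1, 2, by decide, h, h'⟩
      · exact ⟨1, 3, by decide, h, h'⟩
      · exact ⟨2, 3, by decide, h, h'⟩
    obtain ⟨b, c, hbc, hb3, hc3⟩ := key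
    have hcap : 1 < (S b ∩ S c).card := by
      have h1 : (S b ∪ S c).card ≤ 4 := by
        simpa using Finset.card_le_univ (S b ∪ S c)
      have h2 := Finset.card_inter_add_card_union (S b) (S c)
      omega
    obtain ⟨i, hi, j, hj, hij⟩ := Finset.one_lt_card.mp hcap
    have hib := (Finset.mem_inter.mp hi).1
    have hic := (Finset.mem_inter.mp hi).2
    have hjb := (Finset.mem_inter.mp hj).1
    have hjc := (Finset.mem_inter.mp hj).2
    have h1 := hEc i j hij
    have h2 : (∑ b' ∈ ({b, c} : Finset (Fin 4)), if i ∈ S b' ∧ j ∈ S b' then (1:ℕ) else 0)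
        ≤ ∑ b', if i ∈ S b' ∧ j ∈ S b' then (1:ℕ) else 0 :=
      Finset.sum_le_sum_of_subset (Finset.subset_univ _)
    rw [Finset.sum_pair hbc, if_pos ⟨hib, hjb⟩, if_pos ⟨hic, hjc⟩] at h2
    omega
end
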